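/- arXiv:1602.04482 — 7 statements merged into one kernel-verified Lean document; each statement's English description precedes it below -/
import Mathlib

section
/- Let n, k, r, δ be integers with 0 < r < k ≤ n − ⌈k/r⌉(δ − 1) and δ ≥ 2. Set a = r⌈k/r⌉ − k, b = (r+δ−1)⌈n/(r+δ−1)⌉ − n, m = ⌈n/(r+δ−1)⌉ − 1, and v = r + δ − 1 − b − ⌊(r+δ−1−b)/m⌋·m, and assume b > a. Define d_new = n − k + 1 − min{v, ⌈k/r⌉ − 1} − (⌈k/r⌉ − 1)(⌊(r+δ−1−b)/m⌋ + δ − 1) and d_old = n − k + 1 − ⌈k/r⌉(δ − 1) + (b − r). Then d_new − d_old ≥ ⌊(r+δ−1−b)/m⌋ · (m − ⌈k/r⌉ + 1) ≥ 0. -/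
/-- The new lower bound `d_new` for the maximal minimum distance of linear
`(n,k,r,δ)`-LRCs improves on the earlier bound `d_old`:
`d_new - d_old ≥ ⌊(r+δ-1-b)/m⌋ (m - ⌈k/r⌉ + 1) ≥ 0`. -/
theorem dnew_improves_dold
    (n k r δ : ℤ) (hr : 0 < r) (hrk : r < k) (hδ : 2 ≤ δ)
    (hkn : k ≤ n - ⌈(k : ℚ) / (r : ℚ)⌉ * (δ - 1))
    (a b m v fl dnew dold : ℤ)
    (ha : a = r * ⌈(k : ℚ) / (r : ℚ)⌉ - k)
    (hb : b = (r + δ - 1) * ⌈(n : ℚ) / ((r : ℚ) + (δ : ℚ) - 1)⌉ - n)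
    (hm : m = ⌈(n : ℚ) / ((r : ℚ) + (δ : ℚ) - 1)⌉ - 1)
    (hfl : fl = ⌊((r + δ - 1 - b : ℤ) : ℚ) / (m : ℚ)⌋)
    (hv : v = r + δ - 1 - b - fl * m)
    (hba : a < b)
    (hdnew : dnew = n - k + 1 - min v (⌈(k : ℚ) / (r : ℚ)⌉ - 1)
      - (⌈(k : ℚ) / (r : ℚ)⌉ - 1) * (fl + δ - 1))
    (hdold : dold = n - k + 1 - ⌈(k : ℚ) / (r : ℚ)⌉ * (δ - 1) + (b - r)) :
    fl * (m - ⌈(k : ℚ) / (r : ℚ)⌉ + 1) ≤ dnew - dold ∧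
      0 ≤ fl * (m - ⌈(k : ℚ) / (r : ℚ)⌉ + 1) := by
  set K : ℤ := ⌈(k : ℚ) / (r : ℚ)⌉ with hK
  set M : ℤ := ⌈(n : ℚ) / ((r : ℚ) + (δ : ℚ) - 1)⌉ with hM
  have hrq : (0:ℚ) < (r:ℚ) := by exact_mod_cast hr
  have hδq : (2:ℚ) ≤ (δ:ℚ) := by exact_mod_cast hδ
  have hs : (0:ℚ) < (r:ℚ) + (δ:ℚ) - 1 := by linarith
  -- k ≤ K * r
  have hKk : (k:ℚ) ≤ (K:ℚ) * (r:ℚ) := by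
    have h := Int.le_ceil ((k : ℚ) / (r : ℚ))
    rw [div_le_iff₀ hrq] at h
    exact h
  have hKkZ : k ≤ K * r := by exact_mod_cast hKk
  -- K ≥ 2
  have hK2 : 2 ≤ K := by
    by_contra h
    push_neg at h
    have hK1 : (K:ℚ) ≤ 1 := by exact_mod_cast (by omega : K ≤ 1)
    have hkr : (r:ℚ) < (k:ℚ) := by exact_mod_cast hrk
    nlinarith
  -- n ≤ M * (r+δ-1)
  have hMl : (n:ℚ) ≤ (M:ℚ) * ((r:ℚ) + (δ:ℚ) - 1) := by
    have h := Int.le_ceil ((n : ℚ) / ((r : ℚ) + (δ : ℚ) - 1))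
    rw [div_le_iff₀ hs] at h
    exact h
  -- (M-1)*(r+δ-1) < n
  have hMu : ((M:ℚ) - 1) * ((r:ℚ) + (δ:ℚ) - 1) < (n:ℚ) := by
    have h := Int.ceil_lt_add_one ((n : ℚ) / ((r : ℚ) + (δ : ℚ) - 1))
    have h2 : ((M:ℚ) - 1) < (n:ℚ) / ((r:ℚ) + (δ:ℚ) - 1) := by
      rw [hM]; push_cast; linarith
    calc ((M:ℚ) - 1) * ((r:ℚ) + (δ:ℚ) - 1)
        < ((n:ℚ) / ((r:ℚ) + (δ:ℚ) - 1)) * ((r:ℚ) + (δ:ℚ) - 1) := by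
          exact mul_lt_mul_of_pos_right h2 hs
      _ = (n:ℚ) := div_mul_cancel₀ _ (ne_of_gt hs)
  -- b < r + δ - 1
  have hbZ : b < r + δ - 1 := by
    have hq : (b:ℚ) < (r:ℚ) + (δ:ℚ) - 1 := by
      have hb' : (b:ℚ) = ((r:ℚ) + (δ:ℚ) - 1) * (M:ℚ) - (n:ℚ) := by
        rw [hb]; push_cast; ring
      nlinarith
    exact_mod_cast (by push_cast; exact hq : ((b:ℚ) < ((r + δ - 1 : ℤ) : ℚ)))
  -- M ≥ K + 1
  have hMK : K + 1 ≤ M := by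
    by_contra h
    push_neg at h
    have hMK' : M ≤ K := by omega
    -- n + b = M*(r+δ-1), n ≥ k + K*(δ-1), k = r*K - a, b ≥ a + 1
    have h1 : n + b = M * (r + δ - 1) := by rw [hb]; ring
    have h2 : k + K * (δ - 1) ≤ n := by linarith
    have h3 : k = r * K - a := by omega
    nlinarith
  have hmK : K ≤ m := by omega
  have hm0 : 0 < m := by omega
  -- fl ≥ 0
  have hfl0 : 0 ≤ fl := by
    rw [hfl]
    apply Int.floor_nonneg.mpr
    apply div_nonneg
    · have : (0:ℤ) ≤ r + δ - 1 - b := by omega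
      exact_mod_cast this
    · have : (0:ℤ) ≤ m := le_of_lt hm0
      exact_mod_cast this
  -- key identity
  have key : dnew - dold = (v - min v (K - 1)) + fl * (m - K + 1) := by
    rw [hdnew, hdold]
    have hv' : r + δ - 1 - b = v + fl * m := by omega
    linear_combination hv'
  constructor
  · have := min_le_left v (K - 1)
    linarith
  · exact mul_nonneg hfl0 (by omega)
end

section
/- Let n, k, r, δ be integers with 0 < r < k ≤ n − ⌈k/r⌉(δ − 1) and δ ≥ 2, and set a = r⌈k/r⌉ − k and b = (r+δ−1)⌈n/(r+δ−1)⌉ − n. If b > a, then ⌈n/(r+δ−1)⌉ − 1 ≥ ⌈k/r⌉. -/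
/-- If `b > a`, then `⌈n/(r+δ-1)⌉ - 1 ≥ ⌈k/r⌉`. -/
theorem ceil_ratio_bound
    (n k r δ : ℤ) (hr : 0 < r) (hrk : r < k) (hδ : 2 ≤ δ)
    (hkn : k ≤ n - ⌈(k : ℚ) / (r : ℚ)⌉ * (δ - 1))
    (a b : ℤ)
    (ha : a = r * ⌈(k : ℚ) / (r : ℚ)⌉ - k)
    (hb : b = (r + δ - 1) * ⌈(n : ℚ) / ((r : ℚ) + (δ : ℚ) - 1)⌉ - n)
    (hba : a < b) :
    ⌈(k : ℚ) / (r : ℚ)⌉ ≤ ⌈(n : ℚ) / ((r : ℚ) + (δ : ℚ) - 1)⌉ - 1 := by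
  set m := ⌈(k : ℚ) / (r : ℚ)⌉ with hm
  set M := ⌈(n : ℚ) / ((r : ℚ) + (δ : ℚ) - 1)⌉ with hM
  have hs : (0:ℤ) < r + δ - 1 := by linarith
  have key : (r + δ - 1) * m < (r + δ - 1) * M := by nlinarith
  have := lt_of_mul_lt_mul_left key (le_of_lt hs)
  omega
end

section
/- Let m and t be natural numbers with 1 ≤ m and t ≤ m, let η : {1,…,m} → ℕ, and let s = Σ_{i=1}^m η(i). Then there exists a subset I ⊆ {1,…,m} with |I| = t such that Σ_{i∈I} η(i) ≥ t·⌊s/m⌋ + min{t, s − m·⌊s/m⌋}. -/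
open scoped BigOperators

/-- Averaging bound: for `η : Fin m → ℕ` with total sum `s`, there is a `t`-element
subset `I` whose sum is at least `t⌊s/m⌋ + min{t, s - m⌊s/m⌋}`. -/
theorem exists_subset_sum_ge_avg
    (m t : ℕ) (hm : 1 ≤ m) (ht : t ≤ m) (η : Fin m → ℕ) :
    ∃ I : Finset (Fin m), I.card = t ∧
      t * ((∑ i, η i) / m) + min t ((∑ i, η i) - m * ((∑ i, η i) / m)) ≤ ∑ i ∈ I, η i := by
  set s := ∑ i, η i with hs
  set q := s / m with hq
  have hsm : m * q + s % m = s := Nat.div_add_mod s m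
  have hrm : s % m < m := Nat.mod_lt _ hm
  have hr : s - m * q = s % m := by omega
  rw [hr]
  rcases Nat.eq_zero_or_pos t with rfl | htpos
  · exact ⟨∅, by simp⟩
  set σ := Tuple.sort η with hσ
  have hmono : Monotone (η ∘ σ) := Tuple.monotone_sort η
  set g := η ∘ σ with hg
  have hgs : ∑ i, g i = s := by
    rw [hs, hg]
    exact Fintype.sum_equiv σ _ _ (fun i => rfl)
  set a : Fin m := ⟨m - t, by omega⟩ with ha
  have hav : (a : ℕ) = m - t := rfl
  refine ⟨(Finset.Ici a).map σ.toEmbedding, ?_, ?_⟩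
  · rw [Finset.card_map, Fin.card_Ici, hav]
    omega
  rw [Finset.sum_map]
  have hgeq : ∑ x ∈ Finset.Ici a, η (σ.toEmbedding x) = ∑ i ∈ Finset.Ici a, g i := rfl
  rw [hgeq]
  have hsum : ∑ i ∈ Finset.Iio a, g i + ∑ i ∈ Finset.Ici a, g i = s := by
    have hcompl : (Finset.Ici a)ᶜ = Finset.Iio a := by
      ext x; simp [not_le]
    rw [← hgs, ← Finset.sum_compl_add_sum (Finset.Ici a) g, hcompl]
  have hmin : min t (s % m) ≤ s % m := min_le_right _ _
  have hmin' : min t (s % m) ≤ t := min_le_left _ _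
  have hsplit : (m - t) * q + t * q = m * q := by
    rw [← Nat.add_mul, Nat.sub_add_cancel ht]
  rcases lt_or_ge t m with htm | htm
  · set p : Fin m := ⟨m - t - 1, by omega⟩ with hp
    rcases le_or_gt (q + 1) (g p) with hgp | hgp
    · -- all top entries ≥ q+1
      have hbig : ∀ i ∈ Finset.Ici a, q + 1 ≤ g i := by
        intro i hi
        refine hgp.trans (hmono ?_)
        rw [Finset.mem_Ici] at hi
        refine le_trans ?_ hi
        rw [Fin.le_def]
        show m - t - 1 ≤ m - t
        omega
      have hbd := Finset.card_nsmul_le_sum (Finset.Ici a) g (q + 1) hbig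
      rw [Fin.card_Ici, hav, smul_eq_mul] at hbd
      have hcard : m - (m - t) = t := by omega
      rw [hcard] at hbd
      have hbd' : t * (q + 1) ≤ ∑ i ∈ Finset.Ici a, g i := hbd
      have : t * (q + 1) = t * q + t := by ring
      omega
    · -- low entries ≤ q
      have hgp' : g p ≤ q := by omega
      have hsmall : ∀ i ∈ Finset.Iio a, g i ≤ q := by
        intro i hi
        refine le_trans (hmono ?_) hgp'
        rw [Finset.mem_Iio, Fin.lt_def, hav] at hi
        rw [Fin.le_def]
        show (i : ℕ) ≤ m - t - 1
        omega
      have hbd := Finset.sum_le_card_nsmul (Finset.Iio a) g q hsmall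
      have hbd' : ∑ i ∈ Finset.Iio a, g i ≤ (m - t) * q := by
        rw [Fin.card_Iio, hav, smul_eq_mul] at hbd
        exact hbd
      omega
  · -- t = m : the whole set
    have htm' : t = m := le_antisymm ht htm
    have hlow : ∑ i ∈ Finset.Iio a, g i = 0 := by
      have he : Finset.Iio a = ∅ := by
        rw [← Finset.card_eq_zero, Fin.card_Iio, hav, htm', Nat.sub_self]
      rw [he, Finset.sum_empty]
    have hteq : t * q = m * q := by rw [htm']
    omega
end

section
/- Let n, k, r, δ be integers with 0 < r < k ≤ n − ⌈k/r⌉(δ − 1) and δ ≥ 2; set a = r⌈k/r⌉ − k, b = (r+δ−1)⌈n/(r+δ−1)⌉ − n, m' = ⌈n/(r+δ−1)⌉ − 1, and v = r + δ − 1 − b − ⌊(r+δ−1−b)/m'⌋·m', and assume b > a. Define d_b = n − k + 1 − ⌈k/r⌉(δ − 1) if δ − 1 ≤ (⌈k/r⌉ − 1)⌊(r+δ−1−b)/m'⌋ + min{v, ⌈k/r⌉ − 1}, and d_b = n − k + 1 − min{v, ⌈k/r⌉ − 1} − (⌈k/r⌉ − 1)(⌊(r+δ−1−b)/m'⌋ +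 δ − 1) otherwise. Suppose that no Construction-1 configuration with parameters (n, k, r, δ) has minimum-distance parameter d equal to n − k + 1 − (⌈k/r⌉ − 1)(δ − 1). Then every Construction-1 configuration with parameters (n, k, r, δ) has minimum-distance parameter d ≤ d_b. -/
open scoped BigOperators

/-- A Construction-1 configuration: a finite set `E ⊆ ℕ` covered by nonempty subsets
`F 0, …, F (m-1)`, a positive integer `k`, and ranks `ρ i` with `0 < ρ i < |F i|`,
such that `k ≤ |E| - ∑ η i` (where `η i = |F i| - ρ i`) and
`|F_{[m] \ {j}} ∩ F j| < ρ j` for all `j`. -/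
structure Constr1Config where
  /-- the number of subsets -/
  m : ℕ
  hm : 0 < m
  /-- the subsets `F i` -/
  F : Fin m → Finset ℕ
  /-- the dimension -/
  k : ℕ
  hk : 0 < k
  /-- the ranks of the subsets -/
  ρ : Fin m → ℕ
  hρpos : ∀ i, 0 < ρ i
  hρlt : ∀ i, ρ i < (F i).card
  hdim : (k : ℤ) ≤ ((Finset.univ.biUnion F).card : ℤ) - ∑ i, (((F i).card : ℤ) - (ρ i : ℤ))
  hint : ∀ j, (((Finset.univ.erase j).biUnion F) ∩ F j).card < ρ j

namespace Constr1Config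

variable (c : Constr1Config)

/-- The ground set `E = F_[m]`. -/
def E : Finset ℕ := Finset.univ.biUnion c.F

/-- The parameter `n = |E|`. -/
def n : ℕ := c.E.card

/-- The nullity `η i = |F i| - ρ i`. -/
def η (i : Fin c.m) : ℕ := (c.F i).card - c.ρ i

/-- The parameter `r = max_i ρ i`. -/
def r : ℕ := Finset.univ.sup c.ρ

/-- The parameter `δ = 1 + min_i η i`. -/
def δ : ℕ :=
  1 + Finset.univ.inf' ⟨⟨0, c.hm⟩, Finset.mem_univ _⟩ c.η

/-- The minimum-distance parameter
`d = n - k + 1 - max{∑_{i ∈ I} η i : |F_I| - ∑_{i ∈ I} η i < k}`. -/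
def d : ℤ :=
  (c.n : ℤ) - (c.k : ℤ) + 1 -
    (((Finset.univ.powerset.filter
        (fun I : Finset (Fin c.m) =>
          ((I.biUnion c.F).card : ℤ) - ∑ i ∈ I, (c.η i : ℤ) < (c.k : ℤ))).sup
        (fun I => ∑ i ∈ I, c.η i) : ℕ) : ℤ)

end Constr1Config

open Finset
section BU
variable {ι : Type*} [DecidableEq ι]


lemma biUnion_ite_erase (F : ι → Finset ℕ) (i : ι) (y : ℕ) (hy : y ∈ F i)
    (hy' : ∀ l, l ≠ i → y ∉ F l) (I : Finset ι) :
    I.biUnion (fun l => if l = i then (F i).erase y else F l)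
      = if i ∈ I then (I.biUnion F).erase y else I.biUnion F := by
  ext a
  by_cases hiI : i ∈ I <;> simp only [hiI, if_true, if_false, Finset.mem_biUnion, Finset.mem_erase]
  · constructor
    · rintro ⟨l, hl, ha⟩
      by_cases hli : l = i
      · subst hli; simp only [if_true] at ha
        rw [Finset.mem_erase] at ha
        exact ⟨ha.1, l, hl, ha.2⟩
      · simp only [hli, if_false] at ha
        exact ⟨fun h => hy' l hli (h ▸ ha), l, hl, ha⟩
    · rintro ⟨hne, l, hl, ha⟩
      by_cases hli : l = i
      · subst hli
        exact ⟨l, hl, by simp [Finset.mem_erase, hne, ha]⟩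
      · exact ⟨l, hl, by simp [hli, ha]⟩
  · constructor
    · rintro ⟨l, hl, ha⟩
      have hli : l ≠ i := fun h => hiI (h ▸ hl)
      simp only [hli, if_false] at ha
      exact ⟨l, hl, ha⟩
    · rintro ⟨l, hl, ha⟩
      have hli : l ≠ i := fun h => hiI (h ▸ hl)
      exact ⟨l, hl, by simp [hli, ha]⟩

lemma biUnion_ite_insert (G : ι → Finset ℕ) (w : ι) (z : ℕ) (I : Finset ι) :
    I.biUnion (fun l => if l = w then insert z (G l) else G l)
      = if w ∈ I then insert z (I.biUnion G) else I.biUnion G := by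
  ext a
  by_cases hwI : w ∈ I <;>
    simp only [hwI, if_true, if_false, Finset.mem_biUnion, Finset.mem_insert]
  · constructor
    · rintro ⟨l, hl, ha⟩
      by_cases hlw : l = w
      · subst hlw; simp only [if_true] at ha
        rcases Finset.mem_insert.mp ha with h | h
        · exact Or.inl h
        · exact Or.inr ⟨l, hl, h⟩
      · simp only [hlw, if_false] at ha
        exact Or.inr ⟨l, hl, ha⟩
    · rintro (rfl | ⟨l, hl, ha⟩)
      · exact ⟨w, hwI, by simp⟩
      · by_cases hlw : l = w
        · subst hlw; exact ⟨l, hl, by simp [ha]⟩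
        · exact ⟨l, hl, by simp [hlw, ha]⟩
  · constructor
    · rintro ⟨l, hl, ha⟩
      have hlw : l ≠ w := fun h => hwI (h ▸ hl)
      simp only [hlw, if_false] at ha
      exact ⟨l, hl, ha⟩
    · rintro ⟨l, hl, ha⟩
      have hlw : l ≠ w := fun h => hwI (h ▸ hl)
      exact ⟨l, hl, by simp [hlw, ha]⟩

end BU

namespace C1


variable (c : Constr1Config)

/-- the "bad" predicate -/
def bad (I : Finset (Fin c.m)) : Prop :=
  ((I.biUnion c.F).card : ℤ) - ∑ i ∈ I, (c.η i : ℤ) < (c.k : ℤ)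

/-- the max of `∑ η` over bad sets -/
noncomputable def S : ℕ :=
  (Finset.univ.powerset.filter
        (fun I : Finset (Fin c.m) =>
          ((I.biUnion c.F).card : ℤ) - ∑ i ∈ I, (c.η i : ℤ) < (c.k : ℤ))).sup
        (fun I => ∑ i ∈ I, c.η i)

lemma d_eq : c.d = (c.n : ℤ) - (c.k : ℤ) + 1 - (S c : ℤ) := rfl

lemma eta_cast (i : Fin c.m) : (c.η i : ℤ) = ((c.F i).card : ℤ) - c.ρ i := by
  have := c.hρlt i
  unfold Constr1Config.η
  omega

lemma le_S {I : Finset (Fin c.m)} (h : bad c I) : ∑ i ∈ I, c.η i ≤ S c := by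
  unfold S
  apply Finset.le_sup (f := fun I => ∑ i ∈ I, c.η i)
  simp only [Finset.mem_filter, Finset.mem_powerset]
  exact ⟨Finset.subset_univ I, h⟩

lemma exists_S : ∃ I : Finset (Fin c.m), bad c I ∧ ∑ i ∈ I, c.η i = S c := by
  have hne : (Finset.univ.powerset.filter
        (fun I : Finset (Fin c.m) =>
          ((I.biUnion c.F).card : ℤ) - ∑ i ∈ I, (c.η i : ℤ) < (c.k : ℤ))).Nonempty := by
    refine ⟨∅, ?_⟩
    simp only [Finset.mem_filter, Finset.mem_powerset]
    refine ⟨Finset.empty_subset _, ?_⟩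
    simp only [Finset.biUnion_empty, Finset.card_empty, Finset.sum_empty]
    have := c.hk; push_cast; omega
  obtain ⟨I, hI, hEq⟩ := Finset.exists_mem_eq_sup _ hne (fun I => ∑ i ∈ I, c.η i)
  simp only [Finset.mem_filter, Finset.mem_powerset] at hI
  exact ⟨I, hI.2, hEq.symm⟩

lemma rho_le (i : Fin c.m) : c.ρ i ≤ c.r := Finset.le_sup (Finset.mem_univ i)

lemma exists_rho_eq : ∃ i, c.ρ i = c.r := by
  obtain ⟨i, _, h⟩ := Finset.exists_mem_eq_sup (Finset.univ : Finset (Fin c.m))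
    ⟨⟨0, c.hm⟩, Finset.mem_univ _⟩ c.ρ
  exact ⟨i, h.symm⟩

lemma delta_le_eta (i : Fin c.m) : c.δ ≤ 1 + c.η i := by
  have := Finset.inf'_le (f := c.η) (Finset.mem_univ i)
  unfold Constr1Config.δ
  omega

lemma exists_eta_eq : ∃ w, 1 + c.η w = c.δ := by
  obtain ⟨w, _, h⟩ := Finset.exists_mem_eq_inf' (s := (Finset.univ : Finset (Fin c.m)))
    ⟨⟨0, c.hm⟩, Finset.mem_univ _⟩ c.η
  exact ⟨w, by unfold Constr1Config.δ; omega⟩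

lemma card_biUnion_le (I : Finset (Fin c.m)) :
    ((I.biUnion c.F).card : ℤ) ≤ ∑ i ∈ I, ((c.F i).card : ℤ) := by
  exact_mod_cast Finset.card_biUnion_le

/-- value of a subset is at most `∑ ρ` -/
lemma value_le_sum_rho (I : Finset (Fin c.m)) :
    ((I.biUnion c.F).card : ℤ) - ∑ i ∈ I, (c.η i : ℤ) ≤ ∑ i ∈ I, (c.ρ i : ℤ) := by
  have h1 := card_biUnion_le c I
  have h2 : ∑ i ∈ I, (c.η i : ℤ) = ∑ i ∈ I, (((c.F i).card : ℤ) - c.ρ i) := by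
    apply Finset.sum_congr rfl; intro i _; exact eta_cast c i
  rw [h2, Finset.sum_sub_distrib]
  linarith

lemma k_le_sum_rho : (c.k : ℤ) ≤ ∑ i, (c.ρ i : ℤ) := by
  have h := c.hdim
  have h2 : ∑ i, (((c.F i).card : ℤ) - (c.ρ i : ℤ)) = ∑ i, ((c.F i).card : ℤ) - ∑ i, (c.ρ i : ℤ) := Finset.sum_sub_distrib _ _
  have h3 := card_biUnion_le c Finset.univ
  linarith

lemma exists_private (c : Constr1Config) (i : Fin c.m) :
    ∃ y ∈ c.F i, ∀ l, l ≠ i → y ∉ c.F l := by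
  by_contra hcon
  push_neg at hcon
  have hsub : c.F i ⊆ (Finset.univ.erase i).biUnion c.F := by
    intro y hy
    obtain ⟨l, hli, hyl⟩ := hcon y hy
    exact Finset.mem_biUnion.mpr ⟨l, Finset.mem_erase.mpr ⟨hli, Finset.mem_univ l⟩, hyl⟩
  have h1 : ((Finset.univ.erase i).biUnion c.F) ∩ c.F i = c.F i :=
    Finset.inter_eq_right.mpr hsub
  have h2 := c.hint i
  rw [h1] at h2
  exact absurd h2 (not_lt.mpr (le_of_lt (c.hρlt i)))

lemma hint_step {m : ℕ} (F F₂ : Fin m → Finset ℕ) (ρ ρ₂ : Fin m → ℕ) (z : ℕ)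
    (hsub : ∀ l, F₂ l ⊆ insert z (F l))
    (hzu : ∀ l l', z ∈ F₂ l → z ∈ F₂ l' → l = l')
    (hρ : ∀ l, ρ l ≤ ρ₂ l)
    (hold : ∀ l, (((Finset.univ.erase l).biUnion F) ∩ F l).card < ρ l) :
    ∀ l, (((Finset.univ.erase l).biUnion F₂) ∩ F₂ l).card < ρ₂ l := by
  intro l
  have hss : ((Finset.univ.erase l).biUnion F₂) ∩ F₂ l
      ⊆ ((Finset.univ.erase l).biUnion F) ∩ F l := by
    intro a ha
    rw [Finset.mem_inter] at ha
    obtain ⟨ha1, ha2⟩ := ha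
    rw [Finset.mem_biUnion] at ha1
    obtain ⟨l', hl', hal'⟩ := ha1
    have hll' : l' ≠ l := (Finset.mem_erase.mp hl').1
    by_cases haz : a = z
    · subst haz
      exact absurd (hzu l' l hal' ha2) hll'
    · have h1 : a ∈ F l' := by
        have := hsub l' hal'
        rcases Finset.mem_insert.mp this with h | h
        · exact absurd h haz
        · exact h
      have h2 : a ∈ F l := by
        have := hsub l ha2
        rcases Finset.mem_insert.mp this with h | h
        · exact absurd h haz
        · exact h
      exact Finset.mem_inter.mpr ⟨Finset.mem_biUnion.mpr ⟨l', hl', h1⟩, h2⟩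
  calc (((Finset.univ.erase l).biUnion F₂) ∩ F₂ l).card
      ≤ (((Finset.univ.erase l).biUnion F) ∩ F l).card := Finset.card_le_card hss
    _ < ρ l := hold l
    _ ≤ ρ₂ l := hρ l


lemma two_le_delta : 2 ≤ c.δ := by
  have h : ∀ l, 1 ≤ c.η l := by
    intro l
    have := c.hρlt l
    unfold Constr1Config.η
    omega
  have h2 : 1 ≤ Finset.univ.inf' (⟨⟨0, c.hm⟩, Finset.mem_univ _⟩ :
      (Finset.univ : Finset (Fin c.m)).Nonempty) c.η :=
    Finset.le_inf' _ _ (fun l _ => h l)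
  unfold Constr1Config.δ
  omega

lemma step1 (i j : Fin c.m) (hi : c.δ ≤ c.η i) (hj : c.ρ j < c.r) :
    ∃ c₂ : Constr1Config, c₂.n = c.n ∧ c₂.k = c.k ∧ c₂.r = c.r ∧ c₂.δ = c.δ ∧
      (∑ l, c₂.η l) + 1 = ∑ l, c.η l ∧ S c₂ ≤ S c := by
  classical
  obtain ⟨y, hyF, hyP⟩ := exists_private c i
  obtain ⟨z, hz⟩ := Infinite.exists_notMem_finset (Finset.univ.biUnion c.F)
  have hzF : ∀ l, z ∉ c.F l := fun l h => hz (Finset.mem_biUnion.mpr ⟨l, Finset.mem_univ l, h⟩)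
  have hδ2 : 2 ≤ c.δ := two_le_delta c
  have hηi2 : 2 ≤ c.η i := le_trans hδ2 hi
  set D : Fin c.m → Finset ℕ := fun l => if l = i then (c.F i).erase y else c.F l with hDdef
  set F₂ : Fin c.m → Finset ℕ := fun l => if l = j then insert z (D l) else D l with hF₂def
  set ρ₂ : Fin c.m → ℕ := fun l => if l = j then c.ρ j + 1 else c.ρ l with hρ₂def
  have hDsub : ∀ l, D l ⊆ c.F l := by
    intro l; by_cases h : l = i
    · subst h; simp [hDdef, Finset.erase_subset]
    · simp [hDdef, h]
  have hzD : ∀ l, z ∉ D l := fun l h => hzF l (hDsub l h)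
  have hBU_D : ∀ I : Finset (Fin c.m), I.biUnion D =
      if i ∈ I then (I.biUnion c.F).erase y else I.biUnion c.F :=
    fun I => biUnion_ite_erase c.F i y hyF hyP I
  have hBU : ∀ I : Finset (Fin c.m), I.biUnion F₂ =
      if j ∈ I then insert z (I.biUnion D) else I.biUnion D :=
    fun I => biUnion_ite_insert D j z I
  have hzBD : ∀ I : Finset (Fin c.m), z ∉ I.biUnion D := by
    intro I h
    obtain ⟨l, _, hl⟩ := Finset.mem_biUnion.mp h
    exact hzD l hl
  have hyB : ∀ I : Finset (Fin c.m), i ∈ I → y ∈ I.biUnion c.F :=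
    fun I hiI => Finset.mem_biUnion.mpr ⟨i, hiI, hyF⟩
  have cardB₂ : ∀ I : Finset (Fin c.m), ((I.biUnion F₂).card : ℤ) =
      ((I.biUnion c.F).card : ℤ) - (if i ∈ I then 1 else 0) + (if j ∈ I then 1 else 0) := by
    intro I
    rw [hBU I, hBU_D I]
    by_cases hiI : i ∈ I <;> by_cases hjI : j ∈ I <;>
      simp only [hiI, hjI, if_true, if_false]
    · rw [Finset.card_insert_of_notMem (by
        intro h; exact hzBD I (by rw [hBU_D I]; simp [hiI, h]))]
      rw [Finset.card_erase_of_mem (hyB I hiI)]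
      have h1 : 1 ≤ (I.biUnion c.F).card := Finset.card_pos.mpr ⟨y, hyB I hiI⟩
      push_cast [Nat.sub_add_cancel h1]
      ring
    · rw [Finset.card_erase_of_mem (hyB I hiI)]
      have h1 : 1 ≤ (I.biUnion c.F).card := Finset.card_pos.mpr ⟨y, hyB I hiI⟩
      push_cast [h1]
      omega
    · rw [Finset.card_insert_of_notMem (by
        intro h; exact hzBD I (by rw [hBU_D I]; simp [hiI, h]))]
      push_cast
      ring
    · ring
  have cardF₂ : ∀ l, ((F₂ l).card : ℤ) =
      ((c.F l).card : ℤ) - (if l = i then 1 else 0) + (if l = j then 1 else 0) := by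
    intro l
    have h1 : 1 ≤ (c.F i).card := Finset.card_pos.mpr ⟨y, hyF⟩
    by_cases hli : l = i <;> by_cases hlj : l = j
    · have e : F₂ l = insert z ((c.F i).erase y) := by
        simp only [hF₂def, hDdef]
        rw [if_pos hlj, if_pos hli]
      rw [if_pos hli, if_pos hlj, e, Finset.card_insert_of_notMem
          (fun h => hzF i (Finset.erase_subset _ _ h)),
        Finset.card_erase_of_mem hyF, hli]
      omega
    · have e : F₂ l = (c.F i).erase y := by
        simp only [hF₂def, hDdef]
        rw [if_neg hlj, if_pos hli]
      rw [if_pos hli, if_neg hlj, e, Finset.card_erase_of_mem hyF, hli]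
      omega
    · have e : F₂ l = insert z (c.F l) := by
        simp only [hF₂def, hDdef]
        rw [if_pos hlj, if_neg hli]
      rw [if_neg hli, if_pos hlj, e, Finset.card_insert_of_notMem (hzF l)]
      push_cast
      ring
    · have e : F₂ l = c.F l := by
        simp only [hF₂def, hDdef]
        rw [if_neg hlj, if_neg hli]
      rw [if_neg hli, if_neg hlj, e]
      ring
  have hρ₂le : ∀ l, c.ρ l ≤ ρ₂ l := by
    intro l; by_cases h : l = j <;> simp [hρ₂def, h]
  have hρ₂cast : ∀ l, (ρ₂ l : ℤ) = (c.ρ l : ℤ) + (if l = j then 1 else 0) := by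
    intro l; by_cases h : l = j <;> simp [hρ₂def, h]
  have hρpos₂ : ∀ l, 0 < ρ₂ l := fun l => lt_of_lt_of_le (c.hρpos l) (hρ₂le l)
  have hρlt₂ : ∀ l, ρ₂ l < (F₂ l).card := by
    intro l
    have h1 := cardF₂ l
    have h2 := hρ₂cast l
    have h3 := c.hρlt l
    have h4 : c.ρ i + 2 ≤ (c.F i).card := by
      have := c.hρlt i
      unfold Constr1Config.η at hηi2
      omega
    by_cases hli : l = i <;> by_cases hlj : l = j <;>
      [(subst hli); (subst hli); (subst hlj); skip] <;> omega
  have hcrη : ∀ l, ((F₂ l).card : ℤ) - (ρ₂ l : ℤ) =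
      ((c.F l).card : ℤ) - (c.ρ l : ℤ) - (if l = i then 1 else 0) := by
    intro l
    rw [cardF₂ l, hρ₂cast l]
    ring
  have hsumη : ∑ l, (((F₂ l).card : ℤ) - (ρ₂ l : ℤ)) =
      (∑ l, (((c.F l).card : ℤ) - (c.ρ l : ℤ))) - 1 := by
    rw [Finset.sum_congr rfl (fun l _ => hcrη l), Finset.sum_sub_distrib,
      Finset.sum_ite_eq' Finset.univ i (fun _ => (1:ℤ))]
    simp
  have hcardE₂ : ((Finset.univ.biUnion F₂).card : ℤ) = ((Finset.univ.biUnion c.F).card : ℤ) := by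
    rw [cardB₂ Finset.univ]
    simp
  have hdim₂ : (c.k : ℤ) ≤ ((Finset.univ.biUnion F₂).card : ℤ) -
      ∑ l, (((F₂ l).card : ℤ) - (ρ₂ l : ℤ)) := by
    rw [hcardE₂, hsumη]
    have := c.hdim
    linarith
  have hint₂ : ∀ l, (((Finset.univ.erase l).biUnion F₂) ∩ F₂ l).card < ρ₂ l := by
    apply hint_step c.F F₂ c.ρ ρ₂ z ?_ ?_ hρ₂le c.hint
    · intro l
      by_cases hlj : l = j
      · subst hlj
        simp only [hF₂def, if_pos rfl]
        exact Finset.insert_subset_insert z (hDsub l)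
      · simp only [hF₂def, if_neg hlj]
        exact (hDsub l).trans (Finset.subset_insert z (c.F l))
    · intro l l' h1 h2
      have hl : l = j := by
        by_contra h
        simp only [hF₂def, if_neg h] at h1
        exact hzD l h1
      have hl' : l' = j := by
        by_contra h
        simp only [hF₂def, if_neg h] at h2
        exact hzD l' h2
      rw [hl, hl']

  set c₂ : Constr1Config := ⟨c.m, c.hm, F₂, c.k, c.hk, ρ₂, hρpos₂, hρlt₂, hdim₂, hint₂⟩ with hc₂
  have hη₂cast : ∀ l, (c₂.η l : ℤ) = (c.η l : ℤ) - (if l = i then 1 else 0) := by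
    intro l
    have e : c₂.η l = (F₂ l).card - ρ₂ l := rfl
    have h1 : (c₂.η l : ℤ) = ((F₂ l).card : ℤ) - (ρ₂ l : ℤ) := by
      rw [e]; have := hρlt₂ l; omega
    rw [h1, hcrη l, eta_cast c l]
  have hη₂le : ∀ l, c₂.η l ≤ c.η l := by
    intro l
    have h := hη₂cast l
    by_cases hl : l = i
    · rw [if_pos hl] at h; omega
    · rw [if_neg hl] at h; omega
  refine ⟨c₂, ?_, rfl, ?_, ?_, ?_, ?_⟩
  · -- n
    have : ((Finset.univ.biUnion F₂).card : ℤ) = ((Finset.univ.biUnion c.F).card : ℤ) := hcardE₂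
    show (Finset.univ.biUnion F₂).card = (Finset.univ.biUnion c.F).card
    exact_mod_cast this
  · -- r
    apply le_antisymm
    · apply Finset.sup_le
      intro l _
      by_cases h : l = j
      · show ρ₂ l ≤ _; simp only [hρ₂def, if_pos h]; omega
      · show ρ₂ l ≤ _; simp only [hρ₂def, if_neg h]; exact rho_le c l
    · obtain ⟨w, hw⟩ := exists_rho_eq c
      have hwj : w ≠ j := by intro h; rw [h] at hw; omega
      have : ρ₂ w = c.r := by simp only [hρ₂def, if_neg hwj]; exact hw
      calc c.r = ρ₂ w := this.symm
        _ ≤ Finset.univ.sup ρ₂ := Finset.le_sup (Finset.mem_univ w)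
  · -- δ
    obtain ⟨w₀, hw₀⟩ := exists_eta_eq c
    have hw₀i : w₀ ≠ i := by
      intro h; rw [h] at hw₀; omega
    have hη₂w₀ : c₂.η w₀ = c.η w₀ := by
      have := hη₂cast w₀
      simp only [if_neg hw₀i] at this
      omega
    have hδlow : ∀ l, c.δ ≤ 1 + c₂.η l := by
      intro l
      have h1 := hη₂cast l
      have h2 := delta_le_eta c l
      by_cases h : l = i
      · rw [if_pos h] at h1
        have hi' : c.η i ≤ c.η l := by rw [h]
        omega
      · rw [if_neg h] at h1
        omega
    apply le_antisymm
    · calc c₂.δ ≤ 1 + c₂.η w₀ := delta_le_eta c₂ w₀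
        _ = 1 + c.η w₀ := by rw [hη₂w₀]
        _ = c.δ := hw₀
    · obtain ⟨w₂, hw₂⟩ := exists_eta_eq c₂
      calc c.δ ≤ 1 + c₂.η w₂ := hδlow w₂
        _ = c₂.δ := hw₂
  · -- measure
    have h1 : ∑ l, (c₂.η l : ℤ) = ∑ l, ((c.η l : ℤ) - (if l = i then 1 else 0)) :=
      Finset.sum_congr rfl (fun l _ => hη₂cast l)
    rw [Finset.sum_sub_distrib, Finset.sum_ite_eq' Finset.univ i (fun _ => (1:ℤ))] at h1
    simp only [Finset.mem_univ, if_pos] at h1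
    have h2 : ((∑ l, c₂.η l : ℕ) : ℤ) + 1 = ((∑ l, c.η l : ℕ) : ℤ) := by
      push_cast
      omega
    exact_mod_cast h2
  · -- S
    obtain ⟨I₀, hbad₀, hS₀⟩ := exists_S c₂
    have hbad₀' : ((I₀.biUnion F₂).card : ℤ) - ∑ l ∈ I₀, (c₂.η l : ℤ) < (c.k : ℤ) := hbad₀
    have hsum₂ : ∑ l ∈ I₀, (c₂.η l : ℤ) =
        ∑ l ∈ I₀, (c.η l : ℤ) - (if i ∈ I₀ then 1 else 0) := by
      rw [Finset.sum_congr rfl (fun l _ => hη₂cast l), Finset.sum_sub_distrib,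
        Finset.sum_ite_eq' I₀ i (fun _ => (1:ℤ))]
    have hbadc : bad c I₀ := by
      unfold bad
      have hc := cardB₂ I₀
      rw [hc, hsum₂] at hbad₀'
      by_cases h1 : i ∈ I₀ <;> by_cases h2 : j ∈ I₀ <;>
        simp only [h1, h2, if_true, if_false] at hbad₀' <;> linarith
    have hle1 : ∑ l ∈ I₀, c₂.η l ≤ ∑ l ∈ I₀, c.η l :=
      Finset.sum_le_sum (fun l _ => hη₂le l)
    calc S c₂ = ∑ l ∈ I₀, c₂.η l := hS₀.symm
      _ ≤ ∑ l ∈ I₀, c.η l := hle1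
      _ ≤ S c := le_S c hbadc


lemma step2 (i p q : Fin c.m) (x : ℕ) (hi : c.δ ≤ c.η i) (hpq : p ≠ q) (hqi : q ≠ i)
    (hxp : x ∈ c.F p) (hxq : x ∈ c.F q) :
    ∃ c₂ : Constr1Config, c₂.n = c.n ∧ c₂.k = c.k ∧ c₂.r = c.r ∧ c₂.δ = c.δ ∧
      (∑ l, c₂.η l) + 1 = ∑ l, c.η l ∧ S c₂ ≤ S c := by
  classical
  obtain ⟨y, hyF, hyP⟩ := exists_private c i
  obtain ⟨z, hz⟩ := Infinite.exists_notMem_finset (Finset.univ.biUnion c.F)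
  have hzF : ∀ l, z ∉ c.F l := fun l h => hz (Finset.mem_biUnion.mpr ⟨l, Finset.mem_univ l, h⟩)
  have hδ2 : 2 ≤ c.δ := two_le_delta c
  have hηi2 : 2 ≤ c.η i := le_trans hδ2 hi
  have hxy : x ≠ y := by
    intro h
    exact hyP q hqi (h ▸ hxq)
  have hyE : y ∈ Finset.univ.biUnion c.F := Finset.mem_biUnion.mpr ⟨i, Finset.mem_univ i, hyF⟩
  set D : Fin c.m → Finset ℕ := fun l => if l = i then (c.F i).erase y else c.F l with hDdef
  set F₂ : Fin c.m → Finset ℕ :=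
    fun l => if l = q then insert z ((c.F q).erase x) else D l with hF₂def
  have hDsub : ∀ l, D l ⊆ c.F l := by
    intro l; by_cases h : l = i
    · simp only [hDdef, if_pos h]
      intro a ha
      exact h ▸ (Finset.erase_subset _ _ ha)
    · simp only [hDdef, if_neg h]
      exact fun a ha => ha
  have hzD : ∀ l, z ∉ D l := fun l h => hzF l (hDsub l h)
  have hzF₂ : ∀ l, z ∈ F₂ l → l = q := by
    intro l h
    by_contra hne
    simp only [hF₂def, if_neg hne] at h
    exact hzD l h
  have hqiD : F₂ q = insert z ((c.F q).erase x) := by simp only [hF₂def, if_pos rfl]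
  have hF₂i : F₂ i = (c.F i).erase y := by
    simp only [hF₂def, if_neg (Ne.symm hqi), hDdef, if_pos rfl, if_true]
  have hF₂other : ∀ l, l ≠ q → l ≠ i → F₂ l = c.F l := by
    intro l h1 h2
    simp only [hF₂def, if_neg h1, hDdef, if_neg h2]
  have cardF₂ : ∀ l, ((F₂ l).card : ℤ) =
      ((c.F l).card : ℤ) - (if l = i then 1 else 0) := by
    intro l
    by_cases hlq : l = q
    · have e : F₂ l = insert z ((c.F q).erase x) := by rw [hlq, hqiD]
      have hliq : ¬ l = i := by rw [hlq]; exact hqi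
      rw [if_neg hliq, e, Finset.card_insert_of_notMem
          (fun h => hzF q (Finset.erase_subset _ _ h)),
        Finset.card_erase_of_mem hxq, hlq]
      have h1 : 1 ≤ (c.F q).card := Finset.card_pos.mpr ⟨x, hxq⟩
      omega
    · by_cases hli : l = i
      · have e : F₂ l = (c.F i).erase y := by rw [hli, hF₂i]
        rw [if_pos hli, e, Finset.card_erase_of_mem hyF, hli]
        have h1 : 1 ≤ (c.F i).card := Finset.card_pos.mpr ⟨y, hyF⟩
        omega
      · rw [if_neg hli, hF₂other l hlq hli]
        ring
  have hρlt₂ : ∀ l, c.ρ l < (F₂ l).card := by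
    intro l
    have h1 := cardF₂ l
    have h2 := c.hρlt l
    have h3 : c.ρ i + 2 ≤ (c.F i).card := by
      have := c.hρlt i
      unfold Constr1Config.η at hηi2
      omega
    by_cases hli : l = i
    · rw [if_pos hli] at h1
      have h4 : c.ρ l = c.ρ i := by rw [hli]
      have h5 : (c.F l).card = (c.F i).card := by rw [hli]
      omega
    · rw [if_neg hli] at h1
      omega
  -- subset lemmas for biUnion cards
  have hsub1 : ∀ (I : Finset (Fin c.m)) a, a ∈ I.biUnion c.F → a ≠ y → a ≠ x →
      a ∈ I.biUnion F₂ := by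
    intro I a ha hay hax
    obtain ⟨l, hl, hal⟩ := Finset.mem_biUnion.mp ha
    refine Finset.mem_biUnion.mpr ⟨l, hl, ?_⟩
    by_cases hlq : l = q
    · rw [hlq] at hal
      rw [hlq, hqiD]
      exact Finset.mem_insert_of_mem (Finset.mem_erase.mpr ⟨hax, hal⟩)
    · by_cases hli : l = i
      · rw [hli] at hal
        rw [hli, hF₂i]
        exact Finset.mem_erase.mpr ⟨hay, hal⟩
      · rw [hF₂other l hlq hli]
        exact hal
  have hzB : ∀ I : Finset (Fin c.m), z ∉ I.biUnion c.F := by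
    intro I h
    obtain ⟨l, _, hl⟩ := Finset.mem_biUnion.mp h
    exact hzF l hl
  have hyBnot : ∀ I : Finset (Fin c.m), i ∉ I → y ∉ I.biUnion c.F := by
    intro I hiI h
    obtain ⟨l, hl, hal⟩ := Finset.mem_biUnion.mp h
    exact hyP l (fun he => hiI (he ▸ hl)) hal
  have cardB₂ : ∀ I : Finset (Fin c.m), ((I.biUnion c.F).card : ℤ) -
      (if i ∈ I then 1 else 0) ≤ ((I.biUnion F₂).card : ℤ) := by
    intro I
    by_cases hqI : q ∈ I
    · have hzB₂ : z ∈ I.biUnion F₂ :=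
        Finset.mem_biUnion.mpr ⟨q, hqI, by rw [hqiD]; exact Finset.mem_insert_self z _⟩
      by_cases hiI : i ∈ I
      · have hss : insert z (((I.biUnion c.F).erase y).erase x) ⊆ I.biUnion F₂ := by
          intro a ha
          rcases Finset.mem_insert.mp ha with rfl | ha
          · exact hzB₂
          · obtain ⟨hax, hay, haB⟩ :
                a ≠ x ∧ a ≠ y ∧ a ∈ I.biUnion c.F := by
              have h1 := Finset.mem_erase.mp ha
              have h2 := Finset.mem_erase.mp h1.2
              exact ⟨h1.1, h2.1, h2.2⟩
            exact hsub1 I a haB hay hax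
        have hc1 := Finset.card_le_card hss
        have hc2 : z ∉ ((I.biUnion c.F).erase y).erase x :=
          fun h => hzB I (Finset.erase_subset _ _ (Finset.erase_subset _ _ h))
        rw [Finset.card_insert_of_notMem hc2] at hc1
        have hc3 : (I.biUnion c.F).card - 1 ≤ ((I.biUnion c.F).erase y).card :=
          Finset.pred_card_le_card_erase
        have hc4 : ((I.biUnion c.F).erase y).card - 1 ≤ (((I.biUnion c.F).erase y).erase x).card :=
          Finset.pred_card_le_card_erase
        rw [if_pos hiI]
        omega
      · have hss : insert z ((I.biUnion c.F).erase x) ⊆ I.biUnion F₂ := by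
          intro a ha
          rcases Finset.mem_insert.mp ha with rfl | ha
          · exact hzB₂
          · obtain ⟨hax, haB⟩ := Finset.mem_erase.mp ha
            have hay : a ≠ y := fun h => hyBnot I hiI (h ▸ haB)
            exact hsub1 I a haB hay hax
        have hc1 := Finset.card_le_card hss
        have hc2 : z ∉ (I.biUnion c.F).erase x :=
          fun h => hzB I (Finset.erase_subset _ _ h)
        rw [Finset.card_insert_of_notMem hc2] at hc1
        have hc3 : (I.biUnion c.F).card - 1 ≤ ((I.biUnion c.F).erase x).card :=
          Finset.pred_card_le_card_erase
        rw [if_neg hiI]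
        omega
    · -- q ∉ I : x is untouched inside I
      have hss : (I.biUnion c.F).erase y ⊆ I.biUnion F₂ := by
        intro a ha
        obtain ⟨hay, haB⟩ := Finset.mem_erase.mp ha
        obtain ⟨l, hl, hal⟩ := Finset.mem_biUnion.mp haB
        refine Finset.mem_biUnion.mpr ⟨l, hl, ?_⟩
        have hlq : l ≠ q := fun he => hqI (he ▸ hl)
        by_cases hli : l = i
        · rw [hli] at hal
          rw [hli, hF₂i]
          exact Finset.mem_erase.mpr ⟨hay, hal⟩
        · rw [hF₂other l hlq hli]
          exact hal
      have hc1 := Finset.card_le_card hss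
      have hc3 : (I.biUnion c.F).card - 1 ≤ ((I.biUnion c.F).erase y).card :=
        Finset.pred_card_le_card_erase
      by_cases hiI : i ∈ I
      · rw [if_pos hiI]; omega
      · rw [if_neg hiI]
        have hyB' : y ∉ I.biUnion c.F := hyBnot I hiI
        have : (I.biUnion c.F).erase y = I.biUnion c.F := Finset.erase_eq_of_notMem hyB'
        rw [this] at hc1
        omega
  -- exact computation for the whole ground set
  have hE₂ : Finset.univ.biUnion F₂ = insert z ((Finset.univ.biUnion c.F).erase y) := by
    ext a
    constructor
    · intro ha
      obtain ⟨l, _, hal⟩ := Finset.mem_biUnion.mp ha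
      by_cases hlq : l = q
      · rw [hlq, hqiD] at hal
        rcases Finset.mem_insert.mp hal with rfl | hal
        · exact Finset.mem_insert_self _ _
        · obtain ⟨hax, haq⟩ := Finset.mem_erase.mp hal
          have hay : a ≠ y := fun h => hyP q hqi (h ▸ haq)
          exact Finset.mem_insert_of_mem (Finset.mem_erase.mpr
            ⟨hay, Finset.mem_biUnion.mpr ⟨q, Finset.mem_univ q, haq⟩⟩)
      · by_cases hli : l = i
        · rw [hli, hF₂i] at hal
          obtain ⟨hay, hai⟩ := Finset.mem_erase.mp hal
          exact Finset.mem_insert_of_mem (Finset.mem_erase.mpr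
            ⟨hay, Finset.mem_biUnion.mpr ⟨i, Finset.mem_univ i, hai⟩⟩)
        · rw [hF₂other l hlq hli] at hal
          have hay : a ≠ y := fun h => hyP l hli (h ▸ hal)
          exact Finset.mem_insert_of_mem (Finset.mem_erase.mpr
            ⟨hay, Finset.mem_biUnion.mpr ⟨l, Finset.mem_univ l, hal⟩⟩)
    · intro ha
      rcases Finset.mem_insert.mp ha with rfl | ha
      · exact Finset.mem_biUnion.mpr ⟨q, Finset.mem_univ q,
          by rw [hqiD]; exact Finset.mem_insert_self _ _⟩
      · obtain ⟨hay, haB⟩ := Finset.mem_erase.mp ha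
        by_cases hax : a = x
        · subst hax
          refine Finset.mem_biUnion.mpr ⟨p, Finset.mem_univ p, ?_⟩
          by_cases hpi : p = i
          · rw [hpi] at hxp
            rw [hpi, hF₂i]
            exact Finset.mem_erase.mpr ⟨hxy, hxp⟩
          · rw [hF₂other p hpq hpi]
            exact hxp
        · exact hsub1 Finset.univ a haB hay hax
  have hcardE₂ : ((Finset.univ.biUnion F₂).card : ℤ) =
      ((Finset.univ.biUnion c.F).card : ℤ) := by
    rw [hE₂, Finset.card_insert_of_notMem
      (fun h => hzB Finset.univ (Finset.erase_subset _ _ h)),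
      Finset.card_erase_of_mem hyE]
    have h1 : 1 ≤ (Finset.univ.biUnion c.F).card := Finset.card_pos.mpr ⟨y, hyE⟩
    omega
  have hcrη : ∀ l, ((F₂ l).card : ℤ) - (c.ρ l : ℤ) =
      ((c.F l).card : ℤ) - (c.ρ l : ℤ) - (if l = i then 1 else 0) := by
    intro l
    rw [cardF₂ l]
    ring
  have hsumη : ∑ l, (((F₂ l).card : ℤ) - (c.ρ l : ℤ)) =
      (∑ l, (((c.F l).card : ℤ) - (c.ρ l : ℤ))) - 1 := by
    rw [Finset.sum_congr rfl (fun l _ => hcrη l), Finset.sum_sub_distrib,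
      Finset.sum_ite_eq' Finset.univ i (fun _ => (1:ℤ))]
    simp
  have hdim₂ : (c.k : ℤ) ≤ ((Finset.univ.biUnion F₂).card : ℤ) -
      ∑ l, (((F₂ l).card : ℤ) - (c.ρ l : ℤ)) := by
    rw [hcardE₂, hsumη]
    have := c.hdim
    linarith
  have hint₂ : ∀ l, (((Finset.univ.erase l).biUnion F₂) ∩ F₂ l).card < c.ρ l := by
    apply hint_step c.F F₂ c.ρ c.ρ z ?_ ?_ (fun l => le_refl _) c.hint
    · intro l
      by_cases hlq : l = q
      · rw [hlq, hqiD]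
        intro a ha
        rcases Finset.mem_insert.mp ha with rfl | ha
        · exact Finset.mem_insert_self _ _
        · exact Finset.mem_insert_of_mem (Finset.erase_subset _ _ ha)
      · by_cases hli : l = i
        · rw [hli, hF₂i]
          intro a ha
          exact Finset.mem_insert_of_mem (Finset.erase_subset _ _ ha)
        · rw [hF₂other l hlq hli]
          exact Finset.subset_insert _ _
    · intro l l' h1 h2
      rw [hzF₂ l h1, hzF₂ l' h2]
  set c₂ : Constr1Config := ⟨c.m, c.hm, F₂, c.k, c.hk, c.ρ, c.hρpos, hρlt₂, hdim₂, hint₂⟩ with hc₂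
  have hη₂cast : ∀ l, (c₂.η l : ℤ) = (c.η l : ℤ) - (if l = i then 1 else 0) := by
    intro l
    have e : c₂.η l = (F₂ l).card - c.ρ l := rfl
    have h1 : (c₂.η l : ℤ) = ((F₂ l).card : ℤ) - (c.ρ l : ℤ) := by
      rw [e]; have := hρlt₂ l; omega
    rw [h1, hcrη l, eta_cast c l]
  have hη₂le : ∀ l, c₂.η l ≤ c.η l := by
    intro l
    have h := hη₂cast l
    by_cases hl : l = i
    · rw [if_pos hl] at h; omega
    · rw [if_neg hl] at h; omega
  refine ⟨c₂, ?_, rfl, rfl, ?_, ?_, ?_⟩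
  · -- n
    show (Finset.univ.biUnion F₂).card = (Finset.univ.biUnion c.F).card
    exact_mod_cast hcardE₂
  · -- δ
    obtain ⟨w₀, hw₀⟩ := exists_eta_eq c
    have hw₀i : w₀ ≠ i := by
      intro h; rw [h] at hw₀; omega
    have hη₂w₀ : c₂.η w₀ = c.η w₀ := by
      have := hη₂cast w₀
      rw [if_neg hw₀i] at this
      omega
    have hδlow : ∀ l, c.δ ≤ 1 + c₂.η l := by
      intro l
      have h1 := hη₂cast l
      have h2 := delta_le_eta c l
      by_cases h : l = i
      · rw [if_pos h] at h1
        have hi' : c.η i ≤ c.η l := by rw [h]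
        omega
      · rw [if_neg h] at h1
        omega
    apply le_antisymm
    · calc c₂.δ ≤ 1 + c₂.η w₀ := delta_le_eta c₂ w₀
        _ = 1 + c.η w₀ := by rw [hη₂w₀]
        _ = c.δ := hw₀
    · obtain ⟨w₂, hw₂⟩ := exists_eta_eq c₂
      calc c.δ ≤ 1 + c₂.η w₂ := hδlow w₂
        _ = c₂.δ := hw₂
  · -- measure
    have h1 : ∑ l, (c₂.η l : ℤ) = ∑ l, ((c.η l : ℤ) - (if l = i then 1 else 0)) :=
      Finset.sum_congr rfl (fun l _ => hη₂cast l)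
    rw [Finset.sum_sub_distrib, Finset.sum_ite_eq' Finset.univ i (fun _ => (1:ℤ))] at h1
    simp only [Finset.mem_univ, if_pos] at h1
    have h2 : ((∑ l, c₂.η l : ℕ) : ℤ) + 1 = ((∑ l, c.η l : ℕ) : ℤ) := by
      push_cast
      omega
    exact_mod_cast h2
  · -- S
    obtain ⟨I₀, hbad₀, hS₀⟩ := exists_S c₂
    have hbad₀' : ((I₀.biUnion F₂).card : ℤ) - ∑ l ∈ I₀, (c₂.η l : ℤ) < (c.k : ℤ) := hbad₀
    have hsum₂ : ∑ l ∈ I₀, (c₂.η l : ℤ) =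
        ∑ l ∈ I₀, (c.η l : ℤ) - (if i ∈ I₀ then 1 else 0) := by
      rw [Finset.sum_congr rfl (fun l _ => hη₂cast l), Finset.sum_sub_distrib,
        Finset.sum_ite_eq' I₀ i (fun _ => (1:ℤ))]
    have hbadc : bad c I₀ := by
      unfold bad
      have hcb := cardB₂ I₀
      rw [hsum₂] at hbad₀'
      by_cases h1 : i ∈ I₀
      · rw [if_pos h1] at hbad₀' hcb; linarith
      · rw [if_neg h1] at hbad₀' hcb; linarith
    have hle1 : ∑ l ∈ I₀, c₂.η l ≤ ∑ l ∈ I₀, c.η l :=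
      Finset.sum_le_sum (fun l _ => hη₂le l)
    calc S c₂ = ∑ l ∈ I₀, c₂.η l := hS₀.symm
      _ ≤ ∑ l ∈ I₀, c.η l := hle1
      _ ≤ S c := le_S c hbadc


lemma eta_pos (i : Fin c.m) : 1 ≤ c.η i := by
  have := c.hρlt i
  unfold Constr1Config.η
  omega

lemma key (n k r δ t m' R fl v : ℤ) (hr : 0 < r) (hδ2 : 2 ≤ δ) (ht2 : 2 ≤ t)
    (htl : r * (t - 1) < k) (hm'1 : 1 ≤ m')
    (hnR : n = m' * (r + δ - 1) + R) (hR1 : 1 ≤ R) (hR2 : R ≤ r + δ - 1)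
    (hflv : R = fl * m' + v) (hfl0 : 0 ≤ fl) (hv0 : 0 ≤ v) :
    ∀ N : ℕ, ∀ c : Constr1Config, (∑ l, c.η l) ≤ N →
      (c.n : ℤ) = n → (c.k : ℤ) = k → (c.r : ℤ) = r → (c.δ : ℤ) = δ →
      ((t-1)*(δ-1) + min (δ-1) ((t-1)*fl + min v (t-1)) ≤ (S c : ℤ)) ∨
      (∃ c' : Constr1Config, (c'.n : ℤ) = n ∧ (c'.k : ℤ) = k ∧ (c'.r : ℤ) = r ∧
        (c'.δ : ℤ) = δ ∧ ((S c' : ℤ) = (t-1)*(δ-1))) := by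
  have hd0 : (0:ℤ) < r + δ - 1 := by linarith
  intro N
  induction N with
  | zero =>
    intro c hN hn hk hr' hδ'
    exfalso
    have h1 : 1 ≤ c.η ⟨0, c.hm⟩ := eta_pos c _
    have h2 : c.η ⟨0, c.hm⟩ ≤ ∑ l, c.η l :=
      Finset.single_le_sum (fun l _ => Nat.zero_le _) (Finset.mem_univ _)
    omega
  | succ N ih =>
    intro c hN hn hk hr' hδ'
    have hδcast : ((c.δ : ℕ) : ℤ) = δ := hδ'
    have hδc : ∀ l, (δ:ℤ) - 1 ≤ (c.η l : ℤ) := by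
      intro l
      have h1 := delta_le_eta c l
      omega
    have hρle : ∀ l, (c.ρ l : ℤ) ≤ r := by
      intro l
      have h1 := rho_le c l
      have h2 : ((c.r : ℕ) : ℤ) = r := hr'
      omega
    have bad_small : ∀ I : Finset (Fin c.m), (I.card : ℤ) ≤ t - 1 → bad c I := by
      intro I hI
      unfold bad
      have h1 := value_le_sum_rho c I
      have h2 : ∑ l ∈ I, (c.ρ l : ℤ) ≤ (I.card : ℤ) * r := by
        calc ∑ l ∈ I, (c.ρ l : ℤ) ≤ ∑ _l ∈ I, r := Finset.sum_le_sum (fun l _ => hρle l)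
          _ = (I.card : ℤ) * r := by rw [Finset.sum_const, nsmul_eq_mul]
      have h3 : (I.card : ℤ) * r ≤ (t - 1) * r :=
        mul_le_mul_of_nonneg_right hI (le_of_lt hr)
      rw [hk]
      nlinarith
    have hsum_rho_le : ∑ l, (c.ρ l : ℤ) ≤ (c.m : ℤ) * r := by
      calc ∑ l, (c.ρ l : ℤ) ≤ ∑ _l : Fin c.m, r := Finset.sum_le_sum (fun l _ => hρle l)
        _ = (c.m : ℤ) * r := by
            rw [Finset.sum_const, nsmul_eq_mul, Finset.card_univ, Fintype.card_fin]
    have hm_t : t ≤ (c.m : ℤ) := by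
      have h1 := k_le_sum_rho c
      rw [hk] at h1
      have h2 : r * (t-1) < (c.m : ℤ) * r := by linarith
      nlinarith
    set tn : ℕ := (t - 1).toNat with htn_def
    have htn : (tn : ℤ) = t - 1 := Int.toNat_of_nonneg (by omega)
    have htn1 : 1 ≤ tn := by omega
    have htnm : tn < c.m := by
      have : (tn : ℤ) < (c.m : ℤ) := by omega
      exact_mod_cast this
    by_cases hE : ∃ l, c.δ ≤ c.η l
    · -- some slack remains
      obtain ⟨i, hi⟩ := hE
      have cont : (∃ c₂ : Constr1Config, c₂.n = c.n ∧ c₂.k = c.k ∧ c₂.r = c.r ∧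
          c₂.δ = c.δ ∧ (∑ l, c₂.η l) + 1 = ∑ l, c.η l ∧ S c₂ ≤ S c) →
          ((t-1)*(δ-1) + min (δ-1) ((t-1)*fl + min v (t-1)) ≤ (S c : ℤ)) ∨
          (∃ c' : Constr1Config, (c'.n : ℤ) = n ∧ (c'.k : ℤ) = k ∧ (c'.r : ℤ) = r ∧
            (c'.δ : ℤ) = δ ∧ ((S c' : ℤ) = (t-1)*(δ-1))) := by
        rintro ⟨c₂, hn₂, hk₂, hr₂, hδ₂, hmeas, hSle⟩
        have hres := ih c₂ (by omega) (by rw [hn₂]; exact hn) (by rw [hk₂]; exact hk)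
          (by rw [hr₂]; exact hr') (by rw [hδ₂]; exact hδ')
        rcases hres with hres | hres
        · left
          have : (S c₂ : ℤ) ≤ (S c : ℤ) := by exact_mod_cast hSle
          linarith
        · right
          exact hres
      by_cases hj : ∃ j, c.ρ j < c.r
      · obtain ⟨j, hjlt⟩ := hj
        exact cont (step1 c i j hi hjlt)
      · push_neg at hj
        by_cases hsh : ∃ p, ∃ q, ∃ x : ℕ, p ≠ q ∧ x ∈ c.F p ∧ x ∈ c.F q
        · obtain ⟨p, q, x, hpq, hxp, hxq⟩ := hsh
          rcases eq_or_ne q i with hq | hq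
          · have hpi : p ≠ i := fun h => hpq (h.trans hq.symm)
            exact cont (step2 c i q p x hi hpq.symm hpi hxq hxp)
          · exact cont (step2 c i p q x hi hpq hq hxp hxq)
        · -- disjoint union, all ranks equal to r : numeric endgame
          left
          have hρr : ∀ l, (c.ρ l : ℤ) = r := by
            intro l
            have h1 := rho_le c l
            have h2 := hj l
            have h3 : c.ρ l = c.r := le_antisymm h1 h2
            rw [h3]; exact hr'
          have hdisj : ∀ (p q : Fin c.m), p ≠ q → Disjoint (c.F p) (c.F q) := by
            intro p q hpq
            rw [Finset.disjoint_left]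
            intro a hap haq
            exact hsh ⟨p, q, a, hpq, hap, haq⟩
          have hvalue : ∀ I : Finset (Fin c.m),
              ((I.biUnion c.F).card : ℤ) - ∑ l ∈ I, (c.η l : ℤ) = (I.card : ℤ) * r := by
            intro I
            have hc : (I.biUnion c.F).card = ∑ l ∈ I, (c.F l).card :=
              Finset.card_biUnion (fun p hp q hq hpq => hdisj p q hpq)
            have hc' : ((I.biUnion c.F).card : ℤ) = ∑ l ∈ I, ((c.F l).card : ℤ) := by
              rw [hc]; push_cast; ring
            rw [hc', ← Finset.sum_sub_distrib]
            have h1 : ∀ l ∈ I, ((c.F l).card : ℤ) - (c.η l : ℤ) = r := by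
              intro l _
              rw [eta_cast c l]
              have := hρr l
              linarith
            rw [Finset.sum_congr rfl h1, Finset.sum_const, nsmul_eq_mul]
          have hn_id : n = (c.m : ℤ) * r + ∑ l, (c.η l : ℤ) := by
            have h1 := hvalue Finset.univ
            rw [Finset.card_univ, Fintype.card_fin] at h1
            have h2 : (c.n : ℤ) = ((Finset.univ.biUnion c.F).card : ℤ) := rfl
            rw [← hn, h2]
            linarith
          have hEσ : (c.m : ℤ) * (δ-1) + 1 ≤ ∑ l, (c.η l : ℤ) := by
            have hi' : (δ:ℤ) ≤ (c.η i : ℤ) := by omega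
            have hsplit : ∑ l ∈ Finset.univ.erase i, (c.η l : ℤ) + (c.η i : ℤ)
                = ∑ l, (c.η l : ℤ) :=
              Finset.sum_erase_add _ _ (Finset.mem_univ i)
            have hcard : ((Finset.univ.erase i).card : ℤ) = (c.m : ℤ) - 1 := by
              rw [Finset.card_erase_of_mem (Finset.mem_univ i), Finset.card_univ,
                Fintype.card_fin]
              have : 1 ≤ c.m := c.hm
              push_cast
              omega
            have hlow := Finset.card_nsmul_le_sum (Finset.univ.erase i)
              (fun l => (c.η l : ℤ)) (δ-1) (fun l _ => hδc l)
            rw [nsmul_eq_mul, hcard] at hlow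
            linarith [hi', hsplit, hlow]
          have hm_le : (c.m : ℤ) ≤ m' := by
            have h1 : (c.m : ℤ) * (r + δ - 1) + 1 ≤ n := by linarith [hn_id, hEσ]
            have h2 : (c.m : ℤ) * (r + δ - 1) < (m' + 1) * (r + δ - 1) := by
              linarith [h1, hnR, hR2]
            have h3 := lt_of_mul_lt_mul_right h2 (le_of_lt hd0)
            omega
          have hpow : (Finset.univ.powersetCard tn : Finset (Finset (Fin c.m))).Nonempty :=
            Finset.powersetCard_nonempty.mpr
              (by rw [Finset.card_univ, Fintype.card_fin]; omega)
          obtain ⟨Is, hIsmem, hImax⟩ :=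
            Finset.exists_max_image _ (fun I => ∑ l ∈ I, c.η l) hpow
          obtain ⟨-, hIscard⟩ := Finset.mem_powersetCard.mp hIsmem
          have hIscard' : ((Is.card : ℕ) : ℤ) = t - 1 := by rw [hIscard]; exact htn
          have hswap : ∀ l, l ∉ Is → ∀ i₀, i₀ ∈ Is → c.η l ≤ c.η i₀ := by
            intro l hl i₀ hi₀
            by_contra hlt
            push_neg at hlt
            have hmem' : insert l (Is.erase i₀) ∈ Finset.univ.powersetCard tn := by
              rw [Finset.mem_powersetCard]
              refine ⟨Finset.subset_univ _, ?_⟩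
              rw [Finset.card_insert_of_notMem (fun h => hl (Finset.erase_subset _ _ h)),
                Finset.card_erase_of_mem hi₀, hIscard]
              omega
            have h1 := hImax _ hmem'
            rw [Finset.sum_insert (fun h => hl (Finset.erase_subset _ _ h))] at h1
            have h2 : ∑ x ∈ Is.erase i₀, c.η x + c.η i₀ = ∑ x ∈ Is, c.η x :=
              Finset.sum_erase_add _ _ hi₀
            omega
          have hIsne : Is.Nonempty := Finset.card_pos.mp (by omega)
          obtain ⟨imin, himin, hmin⟩ := Finset.exists_min_image Is c.η hIsne
          set β : ℤ := ∑ l ∈ Is, (c.η l : ℤ) with hβdef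
          set μ : ℤ := (c.η imin : ℤ) with hμdef
          have hb1 : (t-1) * μ ≤ β := by
            have h1 := Finset.card_nsmul_le_sum Is (fun l => (c.η l : ℤ)) μ
              (fun l hl => by simp only [hμdef]; exact_mod_cast hmin l hl)
            rw [nsmul_eq_mul, hIscard'] at h1
            exact h1
          have hβlb : (t-1)*(δ-1) + ((t-1)*fl + min v (t-1)) ≤ β := by
            by_contra hcon
            push_neg at hcon
            have hμub : μ ≤ δ - 1 + fl := by
              have h2 : min v (t-1) ≤ t-1 := min_le_right _ _
              have h3 : (t-1)*μ < (t-1)*((δ-1+fl)+1) := by linarith [hb1, hcon, h2]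
              have h4 := lt_of_mul_lt_mul_left h3 (by omega : (0:ℤ) ≤ t-1)
              omega
            have hcardout : ((Finset.univ \ Is).card : ℤ) = (c.m : ℤ) - (t-1) := by
              rw [Finset.card_sdiff_of_subset (Finset.subset_univ Is), Finset.card_univ,
                Fintype.card_fin, hIscard]
              have h5 : tn ≤ c.m := le_of_lt htnm
              push_cast [h5]
              omega
            have hout : ∑ l ∈ Finset.univ \ Is, (c.η l : ℤ) ≤ ((c.m : ℤ) - (t-1)) * μ := by
              have h6 := Finset.sum_le_card_nsmul (Finset.univ \ Is)
                (fun l => (c.η l : ℤ)) μ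
                (fun l hl => by
                  have hlnotin : l ∉ Is := (Finset.mem_sdiff.mp hl).2
                  simp only [hμdef]
                  exact_mod_cast hswap l hlnotin imin himin)
              rw [nsmul_eq_mul, hcardout] at h6
              exact h6
            have hsplit : ∑ l ∈ Finset.univ \ Is, (c.η l : ℤ) + β = ∑ l, (c.η l : ℤ) :=
              Finset.sum_sdiff (Finset.subset_univ Is)
            have P1 : ((c.m : ℤ) - (t-1)) * μ ≤ ((c.m : ℤ) - (t-1)) * (δ-1+fl) :=
              mul_le_mul_of_nonneg_left hμub (by omega)
            have P2 : (c.m : ℤ) * fl ≤ m' * fl := mul_le_mul_of_nonneg_right hm_le hfl0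
            have P3 : (0:ℤ) ≤ (m' - (c.m : ℤ)) * (r + δ - 1) :=
              mul_nonneg (by omega) (by omega)
            have hminv : min v (t-1) ≤ v := min_le_left _ _
            linarith [hn_id, hEσ, hout, hsplit, P1, P2, P3, hminv, hcon]
          have hbadIs : bad c Is := bad_small Is (by omega)
          have h1 := le_S c hbadIs
          have h2 : ((∑ l ∈ Is, c.η l : ℕ) : ℤ) = β := by
            rw [hβdef]; push_cast; ring
          have h3 : min (δ-1) ((t-1)*fl + min v (t-1)) ≤ (t-1)*fl + min v (t-1) :=
            min_le_right _ _
          have h4 : ((∑ l ∈ Is, c.η l : ℕ) : ℤ) ≤ (S c : ℤ) := by exact_mod_cast h1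
          linarith
    · -- every η l = δ - 1
      push_neg at hE
      have hηeq : ∀ l, (c.η l : ℤ) = δ - 1 := by
        intro l
        have h1 := hE l
        have h2 := delta_le_eta c l
        omega
      obtain ⟨I₀, hI₀⟩ := Finset.powersetCard_nonempty.mpr
        (le_of_lt (by rw [Finset.card_univ, Fintype.card_fin]; exact htnm) :
          tn ≤ (Finset.univ : Finset (Fin c.m)).card)
      obtain ⟨-, hI₀card⟩ := Finset.mem_powersetCard.mp hI₀
      have hbad₀ : bad c I₀ := bad_small I₀ (by rw [hI₀card]; omega)
      have hsum₀ : ∑ l ∈ I₀, (c.η l : ℤ) = (t-1) * (δ-1) := by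
        rw [Finset.sum_congr rfl (fun l _ => hηeq l), Finset.sum_const, nsmul_eq_mul,
          hI₀card, htn]
      obtain ⟨It, hbadt, hSt⟩ := exists_S c
      have hsumt : ((∑ l ∈ It, c.η l : ℕ) : ℤ) = (It.card : ℤ) * (δ-1) := by
        push_cast
        rw [Finset.sum_congr rfl (fun l _ => hηeq l), Finset.sum_const, nsmul_eq_mul]
      have hS_lb : (t-1) * (δ-1) ≤ (S c : ℤ) := by
        have h1 := le_S c hbad₀
        have h2 : ((∑ l ∈ I₀, c.η l : ℕ) : ℤ) = (t-1)*(δ-1) := by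
          push_cast
          exact hsum₀
        have h3 : ((∑ l ∈ I₀, c.η l : ℕ) : ℤ) ≤ (S c : ℤ) := by exact_mod_cast h1
        omega
      have hSeq : (S c : ℤ) = (It.card : ℤ) * (δ-1) := by
        rw [← hSt]; exact hsumt
      by_cases hbig : t ≤ (It.card : ℤ)
      · left
        have h2 : t * (δ-1) ≤ (It.card : ℤ) * (δ-1) :=
          mul_le_mul_of_nonneg_right hbig (by omega)
        have h3 : min (δ-1) ((t-1)*fl + min v (t-1)) ≤ δ - 1 := min_le_left _ _
        linarith [hSeq, h2, h3]
      · right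
        refine ⟨c, hn, hk, hr', hδ', ?_⟩
        have h2 : (It.card : ℤ) * (δ-1) ≤ (t-1) * (δ-1) :=
          mul_le_mul_of_nonneg_right (by omega) (by omega)
        omega

end C1

/-- If no Construction-1 configuration with parameters `(n,k,r,δ)` attains the
generalized Singleton bound, then every Construction-1 configuration with these
parameters has minimum-distance parameter at most the bound `d_b` of Theorem 5.2. -/
theorem constr1_d_le_db_of_no_perfect
    (n k r δ : ℤ) (hr : 0 < r) (hrk : r < k) (hδ : 2 ≤ δ)
    (hkn : k ≤ n - ⌈(k : ℚ) / (r : ℚ)⌉ * (δ - 1))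
    (a b m' v fl db : ℤ)
    (ha : a = r * ⌈(k : ℚ) / (r : ℚ)⌉ - k)
    (hb : b = (r + δ - 1) * ⌈(n : ℚ) / ((r : ℚ) + (δ : ℚ) - 1)⌉ - n)
    (hm : m' = ⌈(n : ℚ) / ((r : ℚ) + (δ : ℚ) - 1)⌉ - 1)
    (hfl : fl = ⌊((r + δ - 1 - b : ℤ) : ℚ) / (m' : ℚ)⌋)
    (hv : v = r + δ - 1 - b - fl * m')
    (hba : a < b)
    (hdb : db = if δ - 1 ≤ (⌈(k : ℚ) / (r : ℚ)⌉ - 1) * fl + min v (⌈(k : ℚ) / (r : ℚ)⌉ - 1)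
      then n - k + 1 - ⌈(k : ℚ) / (r : ℚ)⌉ * (δ - 1)
      else n - k + 1 - min v (⌈(k : ℚ) / (r : ℚ)⌉ - 1)
        - (⌈(k : ℚ) / (r : ℚ)⌉ - 1) * (fl + δ - 1))
    (hnoperfect : ∀ c : Constr1Config,
      (c.n : ℤ) = n → (c.k : ℤ) = k → (c.r : ℤ) = r → (c.δ : ℤ) = δ →
      c.d ≠ n - k + 1 - (⌈(k : ℚ) / (r : ℚ)⌉ - 1) * (δ - 1)) :
    ∀ c : Constr1Config,
      (c.n : ℤ) = n → (c.k : ℤ) = k → (c.r : ℤ) = r → (c.δ : ℤ) = δ →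
      c.d ≤ db := by
  intro c hn hk hr' hδ'
  set t : ℤ := ⌈(k : ℚ) / (r : ℚ)⌉ with ht
  have hrQ : (0:ℚ) < (r:ℚ) := by exact_mod_cast hr
  have htu : k ≤ r * t := by
    have h1 : (k:ℚ)/(r:ℚ) ≤ (t:ℚ) := by rw [ht]; exact Int.le_ceil _
    have h3 : ((k:ℤ):ℚ) ≤ ((r*t : ℤ):ℚ) := by
      push_cast
      nlinarith [(div_le_iff₀ hrQ).mp h1]
    exact_mod_cast h3
  have htl : r * (t - 1) < k := by
    have h1 : (t - 1 : ℤ) < ⌈(k:ℚ)/(r:ℚ)⌉ := by rw [← ht]; omega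
    have h2 : ((t-1:ℤ):ℚ) < (k:ℚ)/(r:ℚ) := Int.lt_ceil.mp h1
    have h3 : ((r*(t-1) : ℤ):ℚ) < ((k:ℤ):ℚ) := by
      have h2' := (lt_div_iff₀ hrQ).mp h2
      push_cast at h2' ⊢
      nlinarith [h2']
    exact_mod_cast h3
  have ht2 : 2 ≤ t := by
    by_contra hcon
    push_neg at hcon
    have h1 : r * t ≤ r * 1 := mul_le_mul_of_nonneg_left (by omega) (le_of_lt hr)
    linarith [htu, h1, hrk]
  have hd0 : (0:ℤ) < r + δ - 1 := by linarith
  have hdQ : ((r:ℚ) + (δ:ℚ) - 1) = ((r + δ - 1 : ℤ):ℚ) := by push_cast; ring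
  have hd0Q : (0:ℚ) < (r:ℚ) + (δ:ℚ) - 1 := by rw [hdQ]; exact_mod_cast hd0
  -- ceiling of n / (r+δ-1) equals m' + 1
  have hceil : ⌈(n : ℚ) / ((r : ℚ) + (δ : ℚ) - 1)⌉ = m' + 1 := by omega
  have hM1 : n ≤ (m' + 1) * (r + δ - 1) := by
    have h1 : (n:ℚ)/((r:ℚ)+(δ:ℚ)-1) ≤ ((m'+1 : ℤ):ℚ) := by
      rw [← hceil]; exact Int.le_ceil _
    have h2 := (div_le_iff₀ hd0Q).mp h1
    rw [hdQ] at h2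
    have h3 : ((n:ℤ):ℚ) ≤ (((m'+1)*(r+δ-1) : ℤ):ℚ) := by push_cast at h2 ⊢; nlinarith [h2]
    exact_mod_cast h3
  have hM2 : m' * (r + δ - 1) < n := by
    have h1 : (m' : ℤ) < ⌈(n : ℚ) / ((r : ℚ) + (δ : ℚ) - 1)⌉ := by omega
    have h2 : ((m':ℤ):ℚ) < (n:ℚ)/((r:ℚ)+(δ:ℚ)-1) := Int.lt_ceil.mp h1
    have h2' := (lt_div_iff₀ hd0Q).mp h2
    rw [hdQ] at h2'
    have h3 : ((m'*(r+δ-1) : ℤ):ℚ) < ((n:ℤ):ℚ) := by push_cast at h2' ⊢; nlinarith [h2']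
    exact_mod_cast h3
  have hm'1 : 1 ≤ m' := by
    have hnd : r + δ - 1 < n := by
      have h1 : 2 * (δ - 1) ≤ t * (δ - 1) :=
        mul_le_mul_of_nonneg_right ht2 (by omega)
      linarith [hkn]
    have h1 : (1 : ℤ) < ⌈(n : ℚ) / ((r : ℚ) + (δ : ℚ) - 1)⌉ := by
      rw [Int.lt_ceil]
      rw [lt_div_iff₀ hd0Q, hdQ]
      have : ((1 * (r+δ-1) : ℤ):ℚ) < ((n:ℤ):ℚ) := by exact_mod_cast (by linarith : 1 * (r+δ-1) < n)
      push_cast at this ⊢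
      linarith
    omega
  set R : ℤ := n - m' * (r + δ - 1) with hRdef
  have hR1 : 1 ≤ R := by omega
  have hR2 : R ≤ r + δ - 1 := by nlinarith [hM1]
  have hbR : r + δ - 1 - b = R := by
    rw [hb, hceil, hRdef]
    ring
  have hm'Q : (0:ℚ) < (m':ℚ) := by exact_mod_cast hm'1
  have hflR : fl = ⌊(R:ℚ)/(m':ℚ)⌋ := by rw [hfl, hbR]
  have hfl_le : fl * m' ≤ R := by
    have h1 : (fl:ℚ) ≤ (R:ℚ)/(m':ℚ) := hflR ▸ Int.floor_le _
    have h2 : ((fl * m' : ℤ) : ℚ) ≤ ((R:ℤ):ℚ) := by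
      push_cast
      nlinarith [(le_div_iff₀ hm'Q).mp h1]
    exact_mod_cast h2
  have hfl_lt : R < (fl + 1) * m' := by
    have h1 : (R:ℚ)/(m':ℚ) < fl + 1 := hflR ▸ Int.lt_floor_add_one _
    have h2 : ((R:ℤ):ℚ) < (((fl+1) * m' : ℤ) : ℚ) := by
      push_cast
      nlinarith [(div_lt_iff₀ hm'Q).mp h1]
    exact_mod_cast h2
  have hfl0 : 0 ≤ fl := by
    by_contra hcon
    push_neg at hcon
    have h1 : fl + 1 ≤ 0 := by omega
    have h2 : (fl + 1) * m' ≤ 0 := mul_nonpos_of_nonpos_of_nonneg h1 (by omega)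
    omega
  have hvR : v = R - fl * m' := by rw [hv]; omega
  have hflv : R = fl * m' + v := by omega
  have hv0 : 0 ≤ v := by omega
  have hkey := C1.key n k r δ t m' R fl v hr hδ ht2 htl hm'1 (by omega) hR1 hR2
    hflv hfl0 hv0 (∑ l, c.η l) c (le_refl _) hn hk hr' hδ'
  rcases hkey with h | ⟨c', hn', hk', hr'', hδ'', hS'⟩
  · have hdb' : db = n - k + 1 - ((t-1)*(δ-1) + min (δ-1) ((t-1)*fl + min v (t-1))) := by
      rw [hdb]
      by_cases hc : δ - 1 ≤ (t-1)*fl + min v (t-1)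
      · rw [if_pos hc, min_eq_left hc]; ring
      · rw [if_neg hc, min_eq_right (le_of_lt (lt_of_not_ge hc))]; ring
    have hde := C1.d_eq c
    rw [hn, hk] at hde
    rw [hde, hdb']
    linarith
  · exfalso
    apply hnoperfect c' hn' hk' hr'' hδ''
    have hde := C1.d_eq c'
    rw [hn', hk', hS'] at hde
    rw [hde]
end

section
/- Let s ≥ 2 be an integer, Σ a finite set with |Σ| = s, n ≥ 1, and let C ⊆ Σ^n be a nonempty code such that for every X ⊆ {1,…,n} there is a natural number ρ(X) with |C_X| = s^{ρ(X)}, where C_X denotes the projection of C onto the coordinates indexed by X (with |C_∅| = 1). Then ρ is the rank function of a matroid on {1,…,n}; that is, for all X, Y ⊆ {1,…,n}: (i) 0 ≤ ρ(X) ≤ |X|; (ii) X ⊆ Y implies ρ(X) ≤ ρ(Y); (iii) ρ(X) + ρ(Y) ≥ ρ(X ∪ Y) + ρ(X ∩ Y). -/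
section AACAux

variable {n : ℕ} {A : Type} [Fintype A] [DecidableEq A]

/-- projection of a word onto the coordinates in `X` -/
private def aacPr (X : Finset (Fin n)) (c : Fin n → A) : ↥X → A := fun i => c ↑i

omit [Fintype A] in
private lemma aacPr_mono (C : Finset (Fin n → A)) {X Y : Finset (Fin n)} (h : X ⊆ Y) :
    (C.image (aacPr X)).card ≤ (C.image (aacPr Y)).card := by
  have him : C.image (aacPr X) =
      (C.image (aacPr Y)).image (fun f : ↥Y → A => fun i : ↥X => f ⟨↑i, h i.2⟩) := by
    rw [Finset.image_image]; rfl
  rw [him]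
  exact Finset.card_image_le

private lemma aacPr_step (C : Finset (Fin n → A)) (X : Finset (Fin n)) (i : Fin n) :
    (C.image (aacPr (insert i X))).card ≤ (C.image (aacPr X)).card * Fintype.card A := by
  classical
  have key := Finset.card_le_card_of_injOn
    (f := fun g : ↥(insert i X) → A =>
      ((fun j : ↥X => g ⟨↑j, Finset.mem_insert_of_mem j.2⟩,
        g ⟨i, Finset.mem_insert_self i X⟩) : (↥X → A) × A))
    (s := C.image (aacPr (insert i X))) (t := (C.image (aacPr X)) ×ˢ Finset.univ)
    (by
      intro g hg
      simp only [Finset.mem_coe, Finset.mem_image] at hg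
      obtain ⟨c, hc, rfl⟩ := hg
      simp only [Finset.mem_coe, Finset.mem_product, Finset.mem_univ, and_true]
      exact Finset.mem_image_of_mem (aacPr X) hc)
    (by
      intro g hg g' hg' hEq
      funext j
      rcases Finset.mem_insert.mp j.2 with hj | hj
      · have h2 := congrArg Prod.snd hEq
        simp only at h2
        have : j = ⟨i, Finset.mem_insert_self i X⟩ := Subtype.ext hj
        rw [this]; exact h2
      · have h1 := congrArg Prod.fst hEq
        simp only at h1
        exact congrFun h1 ⟨↑j, hj⟩)
  calc (C.image (aacPr (insert i X))).card
      ≤ ((C.image (aacPr X)) ×ˢ (Finset.univ : Finset A)).card := key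
    _ = (C.image (aacPr X)).card * Fintype.card A := by
        rw [Finset.card_product, Finset.card_univ]

omit [Fintype A] in
private lemma aacPr_det (C : Finset (Fin n → A)) {X Y : Finset (Fin n)} (i : Fin n)
    (hXY : X ⊆ Y)
    (h : (C.image (aacPr (insert i X))).card ≤ (C.image (aacPr X)).card) :
    (C.image (aacPr (insert i Y))).card ≤ (C.image (aacPr Y)).card := by
  classical
  set rX : (↥(insert i X) → A) → (↥X → A) :=
    fun g => fun j : ↥X => g ⟨↑j, Finset.mem_insert_of_mem j.2⟩ with hrX
  have himX : (C.image (aacPr (insert i X))).image rX = C.image (aacPr X) := by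
    rw [Finset.image_image]; rfl
  have hcardX : ((C.image (aacPr (insert i X))).image rX).card
      = (C.image (aacPr (insert i X))).card := by
    apply le_antisymm Finset.card_image_le
    rw [himX]
    exact h
  have hinjX : Set.InjOn rX (C.image (aacPr (insert i X))) :=
    Finset.injOn_of_card_image_eq hcardX
  set rY : (↥(insert i Y) → A) → (↥Y → A) :=
    fun g => fun j : ↥Y => g ⟨↑j, Finset.mem_insert_of_mem j.2⟩ with hrY
  have hinjY : Set.InjOn rY (C.image (aacPr (insert i Y))) := by
    intro g hg g' hg' hEq
    simp only [Finset.coe_image, Set.mem_image, Finset.mem_coe] at hg hg'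
    obtain ⟨c, hc, rfl⟩ := hg
    obtain ⟨c', hc', rfl⟩ := hg'
    -- c and c' agree on Y
    have hY : ∀ j : Fin n, j ∈ Y → c j = c' j := by
      intro j hj
      exact congrFun hEq ⟨j, hj⟩
    -- hence agree on X, hence their (insert i X)-projections are equal
    have hXproj : aacPr (insert i X) c = aacPr (insert i X) c' := by
      apply hinjX (Finset.mem_coe.mpr (Finset.mem_image_of_mem _ hc))
        (Finset.mem_coe.mpr (Finset.mem_image_of_mem _ hc'))
      funext j
      exact hY ↑j (hXY j.2)
    have hi : c i = c' i := congrFun hXproj ⟨i, Finset.mem_insert_self i X⟩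
    funext j
    rcases Finset.mem_insert.mp j.2 with hj | hj
    · show c ↑j = c' ↑j
      rw [hj]; exact hi
    · exact hY ↑j hj
  have himY : (C.image (aacPr (insert i Y))).image rY = C.image (aacPr Y) := by
    rw [Finset.image_image]; rfl
  exact le_of_eq (by rw [← himY, Finset.card_image_of_injOn hinjY])

end AACAux

/-- Every almost affine code induces a matroid: if `C ⊆ Σ^n` is nonempty and for every
coordinate set `X` the projection `C_X` has cardinality `s ^ ρ(X)`, then `ρ` satisfies
the rank axioms of a matroid on `{1,…,n}`. -/
theorem almost_affine_code_gives_matroid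
    (s n : ℕ) (hs : 2 ≤ s) (hn : 1 ≤ n)
    (A : Type) [Fintype A] [DecidableEq A] (hcard : Fintype.card A = s)
    (C : Finset (Fin n → A)) (hC : C.Nonempty)
    (ρ : Finset (Fin n) → ℕ)
    (hρ : ∀ X : Finset (Fin n),
      (C.image (fun c => fun i : ↥X => c ↑i)).card = s ^ ρ X) :
    (∀ X : Finset (Fin n), ρ X ≤ X.card) ∧
    (∀ X Y : Finset (Fin n), X ⊆ Y → ρ X ≤ ρ Y) ∧
    (∀ X Y : Finset (Fin n), ρ (X ∪ Y) + ρ (X ∩ Y) ≤ ρ X + ρ Y) := by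
  classical
  have hs1 : 1 < s := hs
  have e : ∀ X : Finset (Fin n), (C.image (aacPr X)).card = s ^ ρ X := fun X => hρ X
  -- (i) rank bound
  have hbound : ∀ X : Finset (Fin n), ρ X ≤ X.card := by
    intro X
    have h1 : (C.image (aacPr X)).card ≤ s ^ X.card := by
      have h2 := Finset.card_le_univ (C.image (aacPr X))
      rwa [Fintype.card_fun, Fintype.card_coe, hcard] at h2
    rw [e X] at h1
    exact (Nat.pow_le_pow_iff_right hs1).mp h1
  -- (ii) monotonicity
  have hmono : ∀ X Y : Finset (Fin n), X ⊆ Y → ρ X ≤ ρ Y := by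
    intro X Y h
    have h1 := aacPr_mono C h
    rw [e X, e Y] at h1
    exact (Nat.pow_le_pow_iff_right hs1).mp h1
  -- unit increments
  have hstep : ∀ (X : Finset (Fin n)) (i : Fin n), ρ (insert i X) ≤ ρ X + 1 := by
    intro X i
    have h1 := aacPr_step C X i
    rw [e (insert i X), e X, hcard, ← pow_succ] at h1
    exact (Nat.pow_le_pow_iff_right hs1).mp h1
  -- once determined, always determined
  have hdet : ∀ (X Y : Finset (Fin n)) (i : Fin n), X ⊆ Y →
      ρ (insert i X) ≤ ρ X → ρ (insert i Y) ≤ ρ Y := by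
    intro X Y i hXY h
    have h1 : (C.image (aacPr (insert i X))).card ≤ (C.image (aacPr X)).card := by
      rw [e (insert i X), e X]
      exact Nat.pow_le_pow_right (by omega) h
    have h2 := aacPr_det C i hXY h1
    rw [e (insert i Y), e Y] at h2
    exact (Nat.pow_le_pow_iff_right hs1).mp h2
  -- diminishing returns
  have hdim : ∀ (X Y : Finset (Fin n)) (i : Fin n), X ⊆ Y →
      ρ (insert i Y) + ρ X ≤ ρ (insert i X) + ρ Y := by
    intro X Y i hXY
    by_cases hc : ρ (insert i X) ≤ ρ X
    · have h1 := hdet X Y i hXY hc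
      have h2 := hmono X (insert i X) (Finset.subset_insert i X)
      omega
    · have h1 := hstep Y i
      omega
  -- submodularity by induction on |Y \ X|
  have hsub : ∀ (m : ℕ) (X Y : Finset (Fin n)), (Y \ X).card = m →
      ρ (X ∪ Y) + ρ (X ∩ Y) ≤ ρ X + ρ Y := by
    intro m
    induction m with
    | zero =>
      intro X Y hm
      have hYX : Y ⊆ X := by
        intro j hj
        by_contra hjx
        have : j ∈ Y \ X := Finset.mem_sdiff.mpr ⟨hj, hjx⟩
        rw [Finset.card_eq_zero.mp hm] at this
        exact absurd this (Finset.notMem_empty j)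
      rw [Finset.union_eq_left.mpr hYX, Finset.inter_eq_right.mpr hYX]
    | succ m ih =>
      intro X Y hm
      have hne : (Y \ X).Nonempty := by
        rw [← Finset.card_pos, hm]; omega
      obtain ⟨i, hi⟩ := hne
      have hiY : i ∈ Y := (Finset.mem_sdiff.mp hi).1
      have hiX : i ∉ X := (Finset.mem_sdiff.mp hi).2
      set Y' := Y.erase i with hY'
      have hmem : (Y' \ X).card = m := by
        have h3 : Y' \ X = (Y \ X).erase i := by
          rw [hY', Finset.erase_sdiff_comm]
        rw [h3, Finset.card_erase_of_mem hi, hm]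
        omega
      have h1 := ih X Y' hmem
      have h2 := hdim Y' (X ∪ Y') i Finset.subset_union_right
      have hins : insert i Y' = Y := Finset.insert_erase hiY
      have hXunion : insert i (X ∪ Y') = X ∪ Y := by
        rw [← Finset.union_insert, hins]
      have hXinter : X ∩ Y' = X ∩ Y := by
        ext j
        simp only [Finset.mem_inter, hY', Finset.mem_erase]
        constructor
        · rintro ⟨hjX, _, hjY⟩; exact ⟨hjX, hjY⟩
        · rintro ⟨hjX, hjY⟩
          refine ⟨hjX, fun hji => hiX (hji ▸ hjX), hjY⟩
      rw [hins, hXunion] at h2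
      rw [hXinter] at h1
      omega
  exact ⟨hbound, hmono, fun X Y => hsub ((Y \ X).card) X Y rfl⟩
end

section
/- Let M be a matroid on a finite ground set E with n = |E| and rank k = r_M(E) > 0, and suppose that E is a union of circuits of M (so E is the maximal cyclic flat of M). Then min{|X| : X ⊆ E and r_M(E ∖ X) < k} = n − k + 1 − max{|Z| − r_M(Z) : Z is a cyclic flat of M with Z ≠ E such that no cyclic flat Y of M satisfies Z ⊊ Y ⊊ E}. -/
open scoped BigOperators

attribute [local instance] Classical.propDecidable

/-- A matroid on a finite ground set `E`, given by its rank function on `Finset`s,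
satisfying the rank axioms: boundedness by cardinality, monotonicity and
submodularity (for subsets of the ground set). -/
structure FinMatroid (α : Type) where
  /-- the ground set -/
  E : Finset α
  /-- the rank function -/
  rk : Finset α → ℕ
  rk_le_card : ∀ X, X ⊆ E → rk X ≤ X.card
  rk_mono : ∀ X Y, X ⊆ Y → Y ⊆ E → rk X ≤ rk Y
  rk_submodular : ∀ X Y, X ⊆ E → Y ⊆ E → rk (X ∪ Y) + rk (X ∩ Y) ≤ rk X + rk Y

namespace FinMatroid

variable {α : Type} [DecidableEq α] (M : FinMatroid α)

/-- A circuit: a minimal dependent subset of the ground set. -/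
def IsCircuit (C : Finset α) : Prop :=
  C ⊆ M.E ∧ M.rk C < C.card ∧ ∀ X, X ⊂ C → M.rk X = X.card

/-- A cyclic set: a union of circuits, i.e. every element lies in a circuit
contained in the set. -/
def IsCyclic (X : Finset α) : Prop :=
  X ⊆ M.E ∧ ∀ x ∈ X, ∃ C, C ⊆ X ∧ M.IsCircuit C ∧ x ∈ C

/-- The closure of a set: all ground set elements whose insertion does not
increase the rank. -/
def closure (X : Finset α) : Finset α :=
  M.E.filter (fun y => M.rk (insert y X) = M.rk X)

/-- A flat: a subset of the ground set equal to its closure. -/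
def IsFlat (X : Finset α) : Prop :=
  X ⊆ M.E ∧ M.closure X = X

/-- A cyclic flat: a flat that is also a union of circuits. -/
def IsCyclicFlat (X : Finset α) : Prop :=
  M.IsFlat X ∧ M.IsCyclic X

variable {M}

lemma rk_submodular' (M : FinMatroid α) (X Y : Finset α) (hX : X ⊆ M.E) (hY : Y ⊆ M.E) :
    M.rk (X ∪ Y) + M.rk (X ∩ Y) ≤ M.rk X + M.rk Y := by
  have h := M.rk_submodular X Y hX hY
  convert h using 4 <;> congr!

lemma rk_empty : M.rk ∅ = 0 :=
  Nat.le_zero.mp (by simpa using M.rk_le_card ∅ (Finset.empty_subset _))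

lemma rk_insert_le {X : Finset α} {y : α} (hX : X ⊆ M.E) (hy : y ∈ M.E) :
    M.rk (insert y X) ≤ M.rk X + 1 := by
  have h := rk_submodular' M {y} X (by simpa using hy) hX
  have h1 : M.rk {y} ≤ 1 := by simpa using M.rk_le_card {y} (by simpa using hy)
  have : ({y} : Finset α) ∪ X = insert y X := by
    rw [Finset.insert_eq]
  rw [this] at h
  omega

lemma rk_le_insert {X : Finset α} {y : α} (hX : X ⊆ M.E) (hy : y ∈ M.E) :
    M.rk X ≤ M.rk (insert y X) :=
  M.rk_mono X (insert y X) (Finset.subset_insert _ _) (Finset.insert_subset hy hX)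

lemma rk_union_le_add_card {A B : Finset α} (hA : A ⊆ M.E) (hB : B ⊆ M.E) :
    M.rk (A ∪ B) ≤ M.rk A + B.card := by
  classical
  induction B using Finset.induction_on with
  | empty => simpa using le_refl (M.rk A)
  | @insert b B hb ih =>
    have hbE : b ∈ M.E := hB (Finset.mem_insert_self b B)
    have hBE : B ⊆ M.E := (Finset.subset_insert b B).trans hB
    have h1 : A ∪ insert b B = insert b (A ∪ B) := Finset.union_insert b A B
    have h2 : M.rk (insert b (A ∪ B)) ≤ M.rk (A ∪ B) + 1 :=
      rk_insert_le (Finset.union_subset hA hBE) hbE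
    rw [h1, Finset.card_insert_of_notMem hb]
    have := ih hBE
    omega

lemma rk_le_diff_add_one {X : Finset α} {x : α} (hX : X ⊆ M.E) (hx : x ∈ X) :
    M.rk X ≤ M.rk (X \ {x}) + 1 := by
  have hsub : X ⊆ insert x (X \ {x}) := by
    intro a ha
    by_cases h : a = x
    · simp [h]
    · simp [Finset.mem_insert, Finset.mem_sdiff, ha, h]
  have h1 : M.rk X ≤ M.rk (insert x (X \ {x})) :=
    M.rk_mono _ _ hsub (Finset.insert_subset (hX hx) ((Finset.sdiff_subset).trans hX))
  have h2 : M.rk (insert x (X \ {x})) ≤ M.rk (X \ {x}) + 1 :=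
    rk_insert_le ((Finset.sdiff_subset).trans hX) (hX hx)
  omega

lemma insert_sdiff_self_of_mem {X : Finset α} {x : α} (hx : x ∈ X) :
    insert x (X \ {x}) = X := by
  ext a
  by_cases h : a = x <;> simp [h, hx]

lemma closure_subset_ground (X : Finset α) : M.closure X ⊆ M.E :=
  Finset.filter_subset _ _

lemma mem_closure_iff {X : Finset α} {y : α} :
    y ∈ M.closure X ↔ y ∈ M.E ∧ M.rk (insert y X) = M.rk X := by
  simp [closure]

lemma subset_closure {X : Finset α} (hX : X ⊆ M.E) : X ⊆ M.closure X := by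
  intro x hx
  exact mem_closure_iff.mpr ⟨hX hx, by rw [Finset.insert_eq_self.mpr hx]⟩

lemma rk_union_of_subset_closure {X S : Finset α} (hX : X ⊆ M.E) (hS : S ⊆ M.closure X) :
    M.rk (X ∪ S) = M.rk X := by
  classical
  induction S using Finset.induction_on with
  | empty => simp
  | @insert s S hs ih =>
    have hsX : s ∈ M.closure X := hS (Finset.mem_insert_self s S)
    have hSX : S ⊆ M.closure X := (Finset.subset_insert s S).trans hS
    have hsE : s ∈ M.E := (closure_subset_ground X) hsX
    have hSE : S ⊆ M.E := hSX.trans (closure_subset_ground X)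
    have hXS : M.rk (X ∪ S) = M.rk X := ih hSX
    have hins : M.rk (insert s X) = M.rk X := (mem_closure_iff.mp hsX).2
    have hsub := rk_submodular' M (X ∪ S) (insert s X)
      (Finset.union_subset hX hSE) (Finset.insert_subset hsE hX)
    have h1 : (X ∪ S) ∪ insert s X = X ∪ insert s S := by
      ext a; simp [Finset.mem_union, Finset.mem_insert]; tauto
    have h2 : X ⊆ (X ∪ S) ∩ insert s X := by
      intro a ha; simp [Finset.mem_inter, Finset.mem_union, ha]
    have h3 : M.rk X ≤ M.rk ((X ∪ S) ∩ insert s X) :=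
      M.rk_mono _ _ h2 ((Finset.inter_subset_right).trans (Finset.insert_subset hsE hX))
    rw [h1] at hsub
    have h4 : M.rk X ≤ M.rk (X ∪ insert s S) :=
      M.rk_mono _ _ Finset.subset_union_left
        (Finset.union_subset hX (Finset.insert_subset hsE hSE))
    omega

lemma rk_closure {X : Finset α} (hX : X ⊆ M.E) : M.rk (M.closure X) = M.rk X := by
  have h : X ∪ M.closure X = M.closure X := Finset.union_eq_right.mpr (subset_closure hX)
  rw [← h]
  exact rk_union_of_subset_closure hX (Finset.Subset.refl _)

lemma closure_mono {A B : Finset α} (hAB : A ⊆ B) (hB : B ⊆ M.E) :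
    M.closure A ⊆ M.closure B := by
  intro y hy
  obtain ⟨hyE, hyA⟩ := mem_closure_iff.mp hy
  have hA : A ⊆ M.E := hAB.trans hB
  refine mem_closure_iff.mpr ⟨hyE, le_antisymm ?_ (rk_le_insert hB hyE)⟩
  have hsub := rk_submodular' M (insert y A) B (Finset.insert_subset hyE hA) hB
  have h1 : insert y A ∪ B = insert y B := by
    ext a
    simp only [Finset.mem_union, Finset.mem_insert]
    constructor
    · rintro ((rfl | h) | h)
      · exact Or.inl rfl
      · exact Or.inr (hAB h)
      · exact Or.inr h
    · rintro (rfl | h)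
      · exact Or.inl (Or.inl rfl)
      · exact Or.inr h
  have h2 : A ⊆ insert y A ∩ B := by
    intro a ha; simp [Finset.mem_inter, Finset.mem_insert, ha, hAB ha]
  have h3 : M.rk A ≤ M.rk (insert y A ∩ B) :=
    M.rk_mono _ _ h2 ((Finset.inter_subset_right).trans hB)
  rw [h1, hyA] at hsub
  omega

lemma closure_isFlat {X : Finset α} (hX : X ⊆ M.E) : M.IsFlat (M.closure X) := by
  refine ⟨closure_subset_ground X, ?_⟩
  apply Finset.Subset.antisymm
  · intro y hy
    obtain ⟨hyE, hyc⟩ := mem_closure_iff.mp hy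
    refine mem_closure_iff.mpr ⟨hyE, le_antisymm ?_ (rk_le_insert hX hyE)⟩
    have h1 : M.rk (insert y X) ≤ M.rk (insert y (M.closure X)) :=
      M.rk_mono _ _ (Finset.insert_subset_insert _ (subset_closure hX))
        (Finset.insert_subset hyE (closure_subset_ground X))
    rw [hyc, rk_closure hX] at h1
    exact h1
  · exact subset_closure (closure_subset_ground X)

lemma rk_insert_of_mem_closure {X : Finset α} {y : α} (h : y ∈ M.closure X) :
    M.rk (insert y X) = M.rk X := (mem_closure_iff.mp h).2

lemma exists_circuit : ∀ D : Finset α, D ⊆ M.E → M.rk D < D.card →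
    ∃ C, C ⊆ D ∧ M.IsCircuit C := by
  intro D
  induction D using Finset.strongInduction with
  | _ D ih =>
    intro hD hdep
    by_cases h : ∀ X, X ⊂ D → M.rk X = X.card
    · exact ⟨D, Finset.Subset.refl D, hD, hdep, h⟩
    · push_neg at h
      obtain ⟨X, hXD, hne⟩ := h
      have hXE : X ⊆ M.E := hXD.subset.trans hD
      have : M.rk X < X.card := lt_of_le_of_ne (M.rk_le_card X hXE) hne
      obtain ⟨C, hCX, hC⟩ := ih X hXD hXE this
      exact ⟨C, hCX.trans hXD.subset, hC⟩

lemma circuit_rk_diff {C : Finset α} {x : α} (hC : M.IsCircuit C) (hx : x ∈ C) :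
    M.rk (C \ {x}) = M.rk C := by
  obtain ⟨hCE, hdep, hmin⟩ := hC
  have hss : C \ {x} ⊂ C := Finset.sdiff_ssubset (by simpa using hx) (by simp)
  have h1 : M.rk (C \ {x}) = C.card - 1 := by
    rw [hmin _ hss, Finset.card_sdiff_of_subset (by simpa using hx)]
    simp
  have h2 : M.rk (C \ {x}) ≤ M.rk C := M.rk_mono _ _ Finset.sdiff_subset hCE
  have h3 : 0 < C.card := Finset.card_pos.mpr ⟨x, hx⟩
  omega

/-- if x lies in a circuit contained in X, then x is not a coloop of X -/
lemma rk_diff_eq_of_mem_circuit {X C : Finset α} {x : α} (hX : X ⊆ M.E)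
    (hCX : C ⊆ X) (hC : M.IsCircuit C) (hx : x ∈ C) :
    M.rk (X \ {x}) = M.rk X := by
  have hxE : x ∈ M.E := hC.1 hx
  have hmem : x ∈ M.closure (C \ {x}) := by
    refine mem_closure_iff.mpr ⟨hxE, ?_⟩
    rw [insert_sdiff_self_of_mem hx, circuit_rk_diff hC hx]
  have hsub : M.closure (C \ {x}) ⊆ M.closure (X \ {x}) :=
    closure_mono (Finset.sdiff_subset_sdiff hCX (Finset.Subset.refl _))
      (Finset.sdiff_subset.trans hX)
  have := rk_insert_of_mem_closure (hsub hmem)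
  rw [insert_sdiff_self_of_mem (hCX hx)] at this
  exact this.symm

lemma exists_noncoloop : ∀ Y : Finset α, Y ⊆ M.E → M.rk Y < Y.card →
    ∃ y ∈ Y, M.rk (Y \ {y}) = M.rk Y := by
  intro Y
  induction Y using Finset.strongInduction with
  | _ Y ih =>
    intro hY hdep
    have hne : Y.Nonempty := Finset.card_pos.mp (by omega)
    obtain ⟨y, hy⟩ := hne
    by_cases h : M.rk (Y \ {y}) = M.rk Y
    · exact ⟨y, hy, h⟩
    · have hY' : Y \ {y} ⊆ M.E := Finset.sdiff_subset.trans hY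
      have hle : M.rk (Y \ {y}) ≤ M.rk Y := M.rk_mono _ _ Finset.sdiff_subset hY
      have hge : M.rk Y ≤ M.rk (Y \ {y}) + 1 := rk_le_diff_add_one hY hy
      have heq : M.rk (Y \ {y}) + 1 = M.rk Y := by omega
      have hcard : (Y \ {y}).card = Y.card - 1 := by
        rw [Finset.card_sdiff_of_subset (by simpa using hy)]; simp
      have hdep' : M.rk (Y \ {y}) < (Y \ {y}).card := by
        have h0 : 0 < Y.card := Finset.card_pos.mpr ⟨y, hy⟩
        omega
      obtain ⟨z, hz, hz2⟩ := ih (Y \ {y}) (Finset.sdiff_ssubset (by simpa using hy) (by simp))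
        hY' hdep'
      obtain ⟨hzY, hzy⟩ := Finset.mem_sdiff.mp hz
      have hzy' : ¬ (z = y) := by simpa using hzy
      refine ⟨z, hzY, ?_⟩
      have hsub := rk_submodular' M (Y \ {y}) (Y \ {z}) hY' (Finset.sdiff_subset.trans hY)
      have h1 : (Y \ {y}) ∪ (Y \ {z}) = Y := by
        ext a
        simp only [Finset.mem_union, Finset.mem_sdiff, Finset.mem_singleton]
        constructor
        · rintro (⟨h, _⟩ | ⟨h, _⟩) <;> exact h
        · intro ha
          rcases eq_or_ne a y with rfl | hay
          · exact Or.inr ⟨ha, hzy' ∘ Eq.symm⟩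
          · exact Or.inl ⟨ha, hay⟩
      have h2 : (Y \ {y}) ∩ (Y \ {z}) = (Y \ {y}) \ {z} := by
        ext a; simp only [Finset.mem_inter, Finset.mem_sdiff, Finset.mem_singleton]; tauto
      rw [h1, h2, hz2] at hsub
      have h3 : M.rk (Y \ {z}) ≤ M.rk Y := M.rk_mono _ _ Finset.sdiff_subset hY
      omega

lemma exists_basis : ∀ Y : Finset α, Y ⊆ M.E →
    ∃ B, B ⊆ Y ∧ M.rk B = B.card ∧ M.rk B = M.rk Y := by
  intro Y
  induction Y using Finset.strongInduction with
  | _ Y ih =>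
    intro hY
    by_cases h : M.rk Y = Y.card
    · exact ⟨Y, Finset.Subset.refl Y, h, rfl⟩
    · have hdep : M.rk Y < Y.card := lt_of_le_of_ne (M.rk_le_card Y hY) h
      obtain ⟨y, hy, hy2⟩ := exists_noncoloop Y hY hdep
      obtain ⟨B, hB1, hB2, hB3⟩ := ih (Y \ {y})
        (Finset.sdiff_ssubset (by simpa using hy) (by simp)) (Finset.sdiff_subset.trans hY)
      exact ⟨B, hB1.trans Finset.sdiff_subset, hB2, by rw [hB3, hy2]⟩

lemma indep_subset {B C : Finset α} (hB : B ⊆ M.E) (hind : M.rk B = B.card)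
    (hCB : C ⊆ B) : M.rk C = C.card := by
  have h1 : M.rk (C ∪ (B \ C)) ≤ M.rk C + (B \ C).card :=
    rk_union_le_add_card (hCB.trans hB) (Finset.sdiff_subset.trans hB)
  have h2 : C ∪ (B \ C) = B := Finset.union_sdiff_of_subset hCB
  have h3 : (B \ C).card = B.card - C.card := Finset.card_sdiff_of_subset hCB
  have h4 : C.card ≤ B.card := Finset.card_le_card hCB
  have h5 : M.rk C ≤ C.card := M.rk_le_card C (hCB.trans hB)
  rw [h2, hind] at h1
  omega

/-- A non-coloop lies in a circuit. -/
lemma mem_circuit_of_rk_diff_eq {X : Finset α} {x : α} (hX : X ⊆ M.E) (hx : x ∈ X)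
    (h : M.rk (X \ {x}) = M.rk X) : ∃ C, C ⊆ X ∧ M.IsCircuit C ∧ x ∈ C := by
  obtain ⟨B, hB1, hB2, hB3⟩ := exists_basis (X \ {x}) (Finset.sdiff_subset.trans hX)
  have hxB : x ∉ B := fun hxB => (Finset.mem_sdiff.mp (hB1 hxB)).2 (Finset.mem_singleton_self x)
  have hDX : insert x B ⊆ X := Finset.insert_subset hx (hB1.trans Finset.sdiff_subset)
  have hDE : insert x B ⊆ M.E := hDX.trans hX
  have hdep : M.rk (insert x B) < (insert x B).card := by
    have h1 : M.rk (insert x B) ≤ M.rk X := M.rk_mono _ _ hDX hX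
    rw [Finset.card_insert_of_notMem hxB]
    omega
  obtain ⟨C, hCD, hC⟩ := exists_circuit (insert x B) hDE hdep
  refine ⟨C, hCD.trans hDX, hC, ?_⟩
  by_contra hxC
  have hCB : C ⊆ B := fun a ha => (Finset.mem_insert.mp (hCD ha)).resolve_left
    (fun h' => hxC (h' ▸ ha))
  have := indep_subset (hB1.trans (Finset.sdiff_subset.trans hX)) hB2 hCB
  exact absurd this (Nat.ne_of_lt hC.2.1)

/-- The cyclic core of a set: its non-coloop elements. -/
def cyclicCore (M : FinMatroid α) (G : Finset α) : Finset α :=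
  G.filter (fun x => M.rk (G \ {x}) = M.rk G)

lemma cyclicCore_subset (G : Finset α) : M.cyclicCore G ⊆ G := Finset.filter_subset _ _

lemma mem_cyclicCore_iff {G : Finset α} {x : α} :
    x ∈ M.cyclicCore G ↔ x ∈ G ∧ M.rk (G \ {x}) = M.rk G := by
  simp [cyclicCore]

lemma circuit_subset_cyclicCore {G C : Finset α} (hG : G ⊆ M.E) (hCG : C ⊆ G)
    (hC : M.IsCircuit C) : C ⊆ M.cyclicCore G := fun y hy =>
  mem_cyclicCore_iff.mpr ⟨hCG hy, rk_diff_eq_of_mem_circuit hG hCG hC hy⟩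

lemma cyclicCore_isCyclic {G : Finset α} (hG : G ⊆ M.E) : M.IsCyclic (M.cyclicCore G) := by
  refine ⟨(cyclicCore_subset G).trans hG, fun x hx => ?_⟩
  obtain ⟨hxG, hrk⟩ := mem_cyclicCore_iff.mp hx
  obtain ⟨C, hCG, hC, hxC⟩ := mem_circuit_of_rk_diff_eq hG hxG hrk
  exact ⟨C, circuit_subset_cyclicCore hG hCG hC, hC, hxC⟩

lemma cyclicCore_rk : ∀ G : Finset α, G ⊆ M.E →
    M.rk (M.cyclicCore G) + (G \ M.cyclicCore G).card = M.rk G := by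
  intro G
  induction G using Finset.strongInduction with
  | _ G ih =>
    intro hG
    by_cases hall : G \ M.cyclicCore G = ∅
    · have : M.cyclicCore G = G :=
        Finset.Subset.antisymm (cyclicCore_subset G)
          (fun a ha => by_contra fun h => (Finset.eq_empty_iff_forall_notMem.mp hall a)
            (Finset.mem_sdiff.mpr ⟨ha, h⟩))
      rw [this]
      simp
    · obtain ⟨x, hx⟩ := Finset.nonempty_iff_ne_empty.mpr hall
      obtain ⟨hxG, hxc⟩ := Finset.mem_sdiff.mp hx
      have hxc' : ¬ M.rk (G \ {x}) = M.rk G := fun h => hxc (mem_cyclicCore_iff.mpr ⟨hxG, h⟩)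
      have hG' : G \ {x} ⊆ M.E := Finset.sdiff_subset.trans hG
      have hrk' : M.rk (G \ {x}) + 1 = M.rk G := by
        have h1 : M.rk (G \ {x}) ≤ M.rk G := M.rk_mono _ _ Finset.sdiff_subset hG
        have h2 : M.rk G ≤ M.rk (G \ {x}) + 1 := rk_le_diff_add_one hG hxG
        omega
      have hcore : M.cyclicCore (G \ {x}) = M.cyclicCore G := by
        apply Finset.Subset.antisymm
        · intro y hy
          obtain ⟨hyG', hyrk⟩ := mem_cyclicCore_iff.mp hy
          obtain ⟨C, hCG', hC, hyC⟩ := mem_circuit_of_rk_diff_eq hG' hyG' hyrk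
          exact mem_cyclicCore_iff.mpr ⟨(Finset.mem_sdiff.mp hyG').1,
            rk_diff_eq_of_mem_circuit hG (hCG'.trans Finset.sdiff_subset) hC hyC⟩
        · intro y hy
          obtain ⟨hyG, hyrk⟩ := mem_cyclicCore_iff.mp hy
          obtain ⟨C, hCG, hC, hyC⟩ := mem_circuit_of_rk_diff_eq hG hyG hyrk
          have hCcore : C ⊆ M.cyclicCore G := circuit_subset_cyclicCore hG hCG hC
          have hCG' : C ⊆ G \ {x} := fun a ha =>
            Finset.mem_sdiff.mpr ⟨hCG ha, by
              simp only [Finset.mem_singleton]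
              rintro rfl
              exact hxc (hCcore ha)⟩
          exact mem_cyclicCore_iff.mpr ⟨hCG' hyC,
            rk_diff_eq_of_mem_circuit hG' hCG' hC hyC⟩
      have hss : G \ {x} ⊂ G := Finset.sdiff_ssubset (by simpa using hxG) (by simp)
      have IH := ih (G \ {x}) hss hG'
      rw [hcore] at IH
      have hdiff : (G \ {x}) \ M.cyclicCore G = (G \ M.cyclicCore G) \ {x} := by
        ext a; simp only [Finset.mem_sdiff, Finset.mem_singleton]; tauto
      have hxdiff : x ∈ G \ M.cyclicCore G := hx
      have hcards : ((G \ M.cyclicCore G) \ {x}).card + 1 = (G \ M.cyclicCore G).card := by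
        rw [← Finset.erase_eq, Finset.card_erase_add_one hxdiff]
      rw [hdiff] at IH
      omega

lemma cyclicCore_isFlat {G : Finset α} (hG : M.IsFlat G) : M.IsFlat (M.cyclicCore G) := by
  have hGE : G ⊆ M.E := hG.1
  have hcE : M.cyclicCore G ⊆ M.E := (cyclicCore_subset G).trans hGE
  refine ⟨hcE, Finset.Subset.antisymm ?_ (subset_closure hcE)⟩
  intro y hy
  have hyE : y ∈ M.E := (closure_subset_ground _) hy
  have hyG : y ∈ G := by
    have h1 : M.closure (M.cyclicCore G) ⊆ M.closure G :=
      closure_mono (cyclicCore_subset G) hGE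
    rw [hG.2] at h1
    exact h1 hy
  by_cases hyc : y ∈ M.cyclicCore G
  · exact hyc
  · exfalso
    have hsub : M.cyclicCore G ⊆ G \ {y} := fun a ha =>
      Finset.mem_sdiff.mpr ⟨cyclicCore_subset G ha, by
        simp only [Finset.mem_singleton]; rintro rfl; exact hyc ha⟩
    have h2 : M.closure (M.cyclicCore G) ⊆ M.closure (G \ {y}) :=
      closure_mono hsub (Finset.sdiff_subset.trans hGE)
    have h3 := rk_insert_of_mem_closure (h2 hy)
    rw [insert_sdiff_self_of_mem hyG] at h3
    exact hyc (mem_cyclicCore_iff.mpr ⟨hyG, h3.symm⟩)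

lemma rk_lt_of_flat_ne {Z : Finset α} (hZ : M.IsFlat Z) (hne : Z ≠ M.E) :
    M.rk Z < M.rk M.E := by
  refine lt_of_le_of_ne (M.rk_mono _ _ hZ.1 (Finset.Subset.refl _)) ?_
  intro heq
  apply hne
  refine Finset.Subset.antisymm hZ.1 ?_
  intro e he
  have h1 : M.rk (insert e Z) ≤ M.rk M.E :=
    M.rk_mono _ _ (Finset.insert_subset he hZ.1) (Finset.Subset.refl _)
  have h2 : M.rk Z ≤ M.rk (insert e Z) := rk_le_insert hZ.1 he
  have : e ∈ M.closure Z := mem_closure_iff.mpr ⟨he, by omega⟩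
  rwa [hZ.2] at this

lemma exists_extension : ∀ (d : ℕ) (Z : Finset α), Z ⊆ M.E → M.rk Z + d < M.rk M.E →
    ∃ F, Z ⊆ F ∧ F ⊆ M.E ∧ M.rk F = M.rk Z + d ∧ F.card = Z.card + d := by
  intro d
  induction d with
  | zero => exact fun Z hZ _ => ⟨Z, Finset.Subset.refl Z, hZ, by simp, by simp⟩
  | succ d ih =>
    intro Z hZ hd
    have hex : ∃ e ∈ M.E, M.rk (insert e Z) ≠ M.rk Z := by
      by_contra h
      push_neg at h
      have hsub : M.E ⊆ M.closure Z := fun e he => mem_closure_iff.mpr ⟨he, h e he⟩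
      have h1 : M.rk (Z ∪ M.E) = M.rk Z := rk_union_of_subset_closure hZ hsub
      have h2 : Z ∪ M.E = M.E := Finset.union_eq_right.mpr hZ
      rw [h2] at h1
      omega
    obtain ⟨e, heE, hrk⟩ := hex
    have h1 : M.rk (insert e Z) = M.rk Z + 1 := by
      have := rk_le_insert hZ heE
      have := rk_insert_le hZ heE
      omega
    have heZ : e ∉ Z := fun h => hrk (by rw [Finset.insert_eq_self.mpr h])
    obtain ⟨F, hF1, hF2, hF3, hF4⟩ := ih (insert e Z) (Finset.insert_subset heE hZ)
      (by omega)
    exact ⟨F, (Finset.subset_insert e Z).trans hF1, hF2, by omega,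
      by rw [hF4, Finset.card_insert_of_notMem heZ]; omega⟩

lemma nullity_mono {Z W : Finset α} (hZW : Z ⊆ W) (hW : W ⊆ M.E) :
    Z.card - M.rk Z ≤ W.card - M.rk W := by
  have h1 : M.rk (Z ∪ (W \ Z)) ≤ M.rk Z + (W \ Z).card :=
    rk_union_le_add_card (hZW.trans hW) (Finset.sdiff_subset.trans hW)
  rw [Finset.union_sdiff_of_subset hZW] at h1
  have h2 : (W \ Z).card = W.card - Z.card := Finset.card_sdiff_of_subset hZW
  have h3 : Z.card ≤ W.card := Finset.card_le_card hZW
  have h4 : M.rk Z ≤ Z.card := M.rk_le_card Z (hZW.trans hW)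
  omega

lemma loops_isCyclicFlat : M.IsCyclicFlat (M.closure (∅ : Finset α)) := by
  refine ⟨closure_isFlat (Finset.empty_subset _), closure_subset_ground _, ?_⟩
  intro x hx
  obtain ⟨hxE, hrk⟩ := mem_closure_iff.mp hx
  have h0 : M.rk {x} = 0 := by
    have h : insert x (∅ : Finset α) = {x} := rfl
    rw [h] at hrk
    rw [hrk, rk_empty]
  refine ⟨{x}, Finset.singleton_subset_iff.mpr hx,
    ⟨Finset.singleton_subset_iff.mpr hxE, by simp [h0], ?_⟩, Finset.mem_singleton_self x⟩
  intro X hX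
  rw [Finset.ssubset_singleton_iff.mp hX, rk_empty, Finset.card_empty]

lemma exists_coatom {Z : Finset α} (hZ : M.IsCyclicFlat Z) (hne : Z ≠ M.E) :
    ∃ W, M.IsCyclicFlat W ∧ W ≠ M.E ∧ (∀ Y, M.IsCyclicFlat Y → W ⊂ Y → Y = M.E) ∧ Z ⊆ W := by
  classical
  set P := M.E.powerset.filter (fun W => M.IsCyclicFlat W ∧ W ≠ M.E ∧ Z ⊆ W) with hP
  have hZP : Z ∈ P := by
    simp only [hP, Finset.mem_filter, Finset.mem_powerset]
    exact ⟨hZ.1.1, hZ, hne, Finset.Subset.refl Z⟩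
  obtain ⟨W, hWP, hmax⟩ := Finset.exists_max_image P Finset.card ⟨Z, hZP⟩
  simp only [hP, Finset.mem_filter, Finset.mem_powerset] at hWP
  obtain ⟨hWE, hWcf, hWne, hZW⟩ := hWP
  refine ⟨W, hWcf, hWne, ?_, hZW⟩
  intro Y hY hWY
  by_contra hYE
  have hYP : Y ∈ P := by
    simp only [hP, Finset.mem_filter, Finset.mem_powerset]
    exact ⟨hY.1.1, hY, hYE, hZW.trans hWY.subset⟩
  exact absurd (Finset.card_lt_card hWY) (not_lt.mpr (hmax Y hYP))

end FinMatroid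

/-- For a matroid whose ground set `E` is a union of circuits and has rank `k > 0`,
`min{|X| : rk(E \ X) < k} = n - k + 1 - max{|Z| - rk Z : Z a coatom of the lattice of
cyclic flats}`. -/
theorem min_card_eq_of_cyclic_ground
    {α : Type} [DecidableEq α] (M : FinMatroid α)
    (hk : 0 < M.rk M.E) (hcyc : M.IsCyclic M.E) :
    (↑(sInf {c : ℕ | ∃ X : Finset α, X ⊆ M.E ∧ M.rk (M.E \ X) < M.rk M.E ∧ X.card = c}) : ℤ) =
      (M.E.card : ℤ) - (M.rk M.E : ℤ) + 1 -
        (↑(sSup {e : ℕ | ∃ Z : Finset α, M.IsCyclicFlat Z ∧ Z ≠ M.E ∧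
          (∀ Y : Finset α, M.IsCyclicFlat Y → Z ⊂ Y → Y = M.E) ∧
          Z.card - M.rk Z = e}) : ℤ) := by
  classical
  open FinMatroid in
  set S := {c : ℕ | ∃ X : Finset α, X ⊆ M.E ∧ M.rk (M.E \ X) < M.rk M.E ∧ X.card = c} with hSdef
  set T := {e : ℕ | ∃ Z : Finset α, M.IsCyclicFlat Z ∧ Z ≠ M.E ∧
      (∀ Y : Finset α, M.IsCyclicFlat Y → Z ⊂ Y → Y = M.E) ∧ Z.card - M.rk Z = e} with hTdef
  -- T is bounded above by |E|
  have hbdd : BddAbove T := by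
    refine ⟨M.E.card, fun e he => ?_⟩
    obtain ⟨Z, hZ, -, -, hZe⟩ := he
    have h1 : Z.card ≤ M.E.card := Finset.card_le_card hZ.1.1
    omega
  -- T is nonempty: the set of loops is a proper cyclic flat, extend to a coatom
  have hTne : T.Nonempty := by
    have hl := FinMatroid.loops_isCyclicFlat (M := M)
    have hlne : M.closure (∅ : Finset α) ≠ M.E := by
      intro h
      have := FinMatroid.rk_closure (M := M) (Finset.empty_subset M.E)
      rw [h, FinMatroid.rk_empty] at this
      omega
    obtain ⟨W, hW1, hW2, hW3, -⟩ := FinMatroid.exists_coatom hl hlne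
    exact ⟨W.card - M.rk W, W, hW1, hW2, hW3, rfl⟩
  have hNT : sSup T ∈ T := Nat.sSup_mem hTne hbdd
  -- Upper bound: construct a witness X with |X| + sSup T + k = n + 1
  have hupper : ∃ c ∈ S, c + sSup T + M.rk M.E = M.E.card + 1 := by
    obtain ⟨W, hWcf, hWne, -, hWN⟩ := hNT
    have hWE : W ⊆ M.E := hWcf.1.1
    have hrkW : M.rk W < M.rk M.E := FinMatroid.rk_lt_of_flat_ne hWcf.1 hWne
    have hrkWc : M.rk W ≤ W.card := M.rk_le_card W hWE
    obtain ⟨F, hWF, hFE, hF3, hF4⟩ := FinMatroid.exists_extension (M.rk M.E - 1 - M.rk W) W hWE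
      (by omega)
    have hXE : M.E \ F ⊆ M.E := Finset.sdiff_subset
    have hEX : M.E \ (M.E \ F) = F := Finset.sdiff_sdiff_eq_self hFE
    have hcard : (M.E \ F).card + F.card = M.E.card :=
      Finset.card_sdiff_add_card_eq_card hFE
    refine ⟨(M.E \ F).card, ⟨M.E \ F, hXE, ?_, rfl⟩, ?_⟩
    · rw [hEX]; omega
    · omega
  -- Lower bound: every member of S is at least n + 1 - k - sSup T
  have hlower : ∀ c ∈ S, M.E.card + 1 ≤ c + M.rk M.E + sSup T := by
    rintro c ⟨X, hXE, hlt, rfl⟩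
    have hEXE : M.E \ X ⊆ M.E := Finset.sdiff_subset
    set G := M.closure (M.E \ X) with hGdef
    have hGE : G ⊆ M.E := FinMatroid.closure_subset_ground _
    have hGrk : M.rk G = M.rk (M.E \ X) := FinMatroid.rk_closure hEXE
    have hGflat : M.IsFlat G := FinMatroid.closure_isFlat hEXE
    set Z := M.cyclicCore G with hZdef
    have hZG : Z ⊆ G := FinMatroid.cyclicCore_subset G
    have hZcf : M.IsCyclicFlat Z :=
      ⟨FinMatroid.cyclicCore_isFlat hGflat, FinMatroid.cyclicCore_isCyclic hGE⟩
    have hZrk : M.rk Z ≤ M.rk G := M.rk_mono _ _ hZG hGE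
    have hZne : Z ≠ M.E := by
      intro h
      rw [h] at hZrk
      omega
    obtain ⟨W, hW1, hW2, hW3, hZW⟩ := FinMatroid.exists_coatom hZcf hZne
    have hnull : Z.card - M.rk Z ≤ W.card - M.rk W := FinMatroid.nullity_mono hZW hW1.1.1
    have hWT : W.card - M.rk W ≤ sSup T := le_csSup hbdd ⟨W, hW1, hW2, hW3, rfl⟩
    have h1 : M.rk Z + (G \ FinMatroid.cyclicCore M G).card = M.rk G :=
      FinMatroid.cyclicCore_rk G hGE
    have h2 : (G \ FinMatroid.cyclicCore M G).card + Z.card = G.card :=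
      Finset.card_sdiff_add_card_eq_card hZG
    have h4 : M.rk Z ≤ Z.card := M.rk_le_card Z hZcf.1.1
    have h6 : (M.E \ X).card ≤ G.card :=
      Finset.card_le_card (FinMatroid.subset_closure hEXE)
    have h7 : (M.E \ X).card + X.card = M.E.card :=
      Finset.card_sdiff_add_card_eq_card hXE
    omega
  have hSne : S.Nonempty := by
    refine ⟨M.E.card, M.E, Finset.Subset.refl _, ?_, rfl⟩
    rw [Finset.sdiff_self, FinMatroid.rk_empty]
    exact hk
  have hsmem : sInf S ∈ S := Nat.sInf_mem hSne
  obtain ⟨c, hcS, hceq⟩ := hupper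
  have h1 : sInf S ≤ c := Nat.sInf_le hcS
  have h2 := hlower _ hsmem
  have heq : sInf S + sSup T + M.rk M.E = M.E.card + 1 := by omega
  have heqz : ((sInf S : ℕ) : ℤ) + ((sSup T : ℕ) : ℤ) + (M.rk M.E : ℤ) = (M.E.card : ℤ) + 1 := by
    exact_mod_cast heq
  linarith
end

section
/- Let M be a matroid on a finite ground set, and let X and Y be cyclic flats of M with X ⊊ Y. Then 0 < r_M(Y) − r_M(X) < |Y| − |X|. -/
open scoped BigOperators

attribute [local instance] Classical.propDecidable

private lemma nullity_step {α : Type} (M : FinMatroid α) (X Y : Finset α)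
    (hXE : X ⊆ M.E) (hYE : Y ⊆ M.E) (hXsubY : X ⊆ Y)
    (C : Finset α) (hCY : C ⊆ Y) (hCE : C ⊆ M.E) (hCrk : M.rk C < C.card)
    (hCind : ∀ Z, Z ⊂ C → M.rk Z = Z.card)
    (y : α) (hyC : y ∈ C) (hyX : y ∉ X) :
    M.rk Y + X.card + 1 ≤ M.rk X + Y.card := by
  have hXC : X ∩ C ⊂ C := by
    rw [Finset.ssubset_def]
    exact ⟨Finset.inter_subset_right,
      fun h => hyX (Finset.mem_inter.mp (h hyC)).1⟩
  have hind : M.rk (X ∩ C) = (X ∩ C).card := hCind _ hXC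
  have hsub1 := M.rk_submodular X C hXE hCE
  have hXCsub : X ∪ C ⊆ Y := Finset.union_subset hXsubY hCY
  have hsub2 := M.rk_submodular (X ∪ C) (Y \ (X ∪ C)) (hXCsub.trans hYE)
    (Finset.sdiff_subset.trans hYE)
  rw [Finset.union_sdiff_of_subset hXCsub] at hsub2
  have h3 : M.rk (Y \ (X ∪ C)) ≤ (Y \ (X ∪ C)).card :=
    M.rk_le_card _ (Finset.sdiff_subset.trans hYE)
  have h4 : (Y \ (X ∪ C)).card + (X ∪ C).card = Y.card :=
    Finset.card_sdiff_add_card_eq_card hXCsub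
  have h5 : (X ∪ C).card + (X ∩ C).card = X.card + C.card :=
    Finset.card_union_add_card_inter X C
  omega

/-- Axiom (Z2) of the lattice of cyclic flats: for cyclic flats `X ⊊ Y`,
`0 < rk Y - rk X < |Y| - |X|`. -/
theorem cyclicFlat_rank_strict
    {α : Type} [DecidableEq α] (M : FinMatroid α) (X Y : Finset α)
    (hX : M.IsCyclicFlat X) (hY : M.IsCyclicFlat Y) (hXY : X ⊂ Y) :
    0 < (M.rk Y : ℤ) - (M.rk X : ℤ) ∧
      (M.rk Y : ℤ) - (M.rk X : ℤ) < (Y.card : ℤ) - (X.card : ℤ) := by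
  obtain ⟨⟨hXE, hXcl⟩, -⟩ := hX
  obtain ⟨⟨hYE, -⟩, -, hYcyc⟩ := hY
  obtain ⟨y, hyY, hyX⟩ := Finset.exists_of_ssubset hXY
  have hXsubY : X ⊆ Y := hXY.subset
  -- Part 1: rk X < rk Y
  have hins : insert y X ⊆ M.E := Finset.insert_subset (hYE hyY) hXE
  have hne : M.rk (insert y X) ≠ M.rk X := by
    intro h
    exact hyX (hXcl ▸ Finset.mem_filter.mpr ⟨hYE hyY, h⟩)
  have h1 : M.rk X ≤ M.rk (insert y X) :=
    M.rk_mono _ _ (Finset.subset_insert _ _) hins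
  have h2 : M.rk (insert y X) ≤ M.rk Y :=
    M.rk_mono _ _ (Finset.insert_subset hyY hXsubY) hYE
  have part1 : M.rk X < M.rk Y :=
    lt_of_lt_of_le (lt_of_le_of_ne h1 (Ne.symm hne)) h2
  -- Part 2: rk Y + |X| + 1 ≤ rk X + |Y|
  obtain ⟨C, hCY, ⟨hCE, hCrk, hCind⟩, hyC⟩ := hYcyc y hyY
  have part2 : M.rk Y + X.card + 1 ≤ M.rk X + Y.card :=
    nullity_step M X Y hXE hYE hXsubY C hCY hCE hCrk hCind y hyC hyX
  exact ⟨by omega, by omega⟩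
end
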